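/- arXiv:1710.10838 — 4 statements merged into one kernel-verified Lean document; each statement's English description precedes it below -/
import Mathlib

section
/- Let H be a finite group that is a minimal counterexample structure as follows: H has a unique minimal normal subgroup M which is elementary abelian of order 2^k, M is contained in the Frattini subgroup of H, H/M ≅ A_k, and H has a faithful irreducible complex representation W of dimension less than 2k in which the restriction to M contains a nontrivial linear character. If every H-orbit on the nontrivial linear characters of M has size 1, k, or at least k(k-1)/2, then dim W = k. -/
/-- The conjugation action of `h : H` on linear characters of a normal subgroup `M`:
`(h • χ)(m) = χ(h⁻¹ m h)`. -/
def conjChar {H : Type*} [Group H] (M : Subgroup H) [hM : M.Normal] (h : H)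
    (χ : M →* ℂˣ) : M →* ℂˣ :=
  χ.comp (MulAut.conjNormal h⁻¹ : MulAut M).toMonoidHom

section Aux
open Module
variable {H : Type*} [Group H] {M : Subgroup H} [hM : M.Normal]

theorem conjChar_coe (h : H) (χ : M →* ℂˣ) (m : M) :
    conjChar M h χ m = χ ⟨h⁻¹ * m * h, by
      simpa using hM.conj_mem m m.2 h⁻¹⟩ := by
  show χ _ = χ _
  apply congrArg χ
  ext
  simp [MulAut.conjNormal_apply]

theorem conjChar_one (χ : M →* ℂˣ) : conjChar M 1 χ = χ := by
  ext m; rw [conjChar_coe]; apply congrArg; ext; simp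

theorem conjChar_conjChar (a b : H) (χ : M →* ℂˣ) :
    conjChar M a (conjChar M b χ) = conjChar M (a * b) χ := by
  ext m; rw [conjChar_coe, conjChar_coe, conjChar_coe]
  apply congrArg; ext; simp [mul_assoc]

variable {V : Type*} [AddCommGroup V] [Module ℂ V]

/-- eigenspace of a character of `M` inside the representation `ρ`. -/
def eigSp (ρ : Representation ℂ H V) (ψ : M →* ℂˣ) : Submodule ℂ V where
  carrier := {v | ∀ m : M, ρ (m : H) v = (ψ m : ℂ) • v}
  add_mem' := by intro a b ha hb m; simp [map_add, ha m, hb m, smul_add]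
  zero_mem' := by intro m; simp
  smul_mem' := by
    intro c v hv m
    rw [LinearMap.map_smul, hv m, smul_comm]

omit hM in
theorem mem_eigSp {ρ : Representation ℂ H V} {ψ : M →* ℂˣ} {v : V} :
    v ∈ eigSp ρ ψ ↔ ∀ m : M, ρ (m : H) v = (ψ m : ℂ) • v := Iff.rfl

theorem ρ_mem_eigSp (ρ : Representation ℂ H V) (h : H) {ψ : M →* ℂˣ} {v : V}
    (hv : v ∈ eigSp ρ ψ) : ρ h v ∈ eigSp ρ (conjChar M h ψ) := by
  intro m
  have hmem : h⁻¹ * m * h ∈ M := by simpa using hM.conj_mem m m.2 h⁻¹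
  have h1 : (m : H) * h = h * (h⁻¹ * m * h) := by group
  calc ρ (m : H) (ρ h v) = ρ ((m : H) * h) v := by rw [map_mul]; rfl
    _ = ρ h (ρ ((⟨h⁻¹ * m * h, hmem⟩ : M) : H) v) := by rw [h1, map_mul]; rfl
    _ = ρ h ((ψ ⟨h⁻¹ * m * h, hmem⟩ : ℂ) • v) := by rw [hv ⟨h⁻¹ * m * h, hmem⟩]
    _ = (conjChar M h ψ m : ℂ) • ρ h v := by rw [map_smul, conjChar_coe]

theorem eigSp_map_eq (ρ : Representation ℂ H V) (h : H) (ψ : M →* ℂˣ) :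
    (eigSp ρ ψ).map (ρ h) = eigSp ρ (conjChar M h ψ) := by
  apply le_antisymm
  · rintro _ ⟨v, hv, rfl⟩; exact ρ_mem_eigSp ρ h hv
  · intro v hv
    refine ⟨ρ h⁻¹ v, ?_, ?_⟩
    · have := ρ_mem_eigSp ρ h⁻¹ hv
      rwa [conjChar_conjChar, inv_mul_cancel, conjChar_one] at this
    · rw [← LinearMap.comp_apply, ← Module.End.mul_eq_comp, ← map_mul, mul_inv_cancel,
        map_one]; rfl

theorem finrank_eigSp_conj [FiniteDimensional ℂ V] (ρ : Representation ℂ H V) (h : H)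
    (ψ : M →* ℂˣ) : finrank ℂ (eigSp ρ (conjChar M h ψ)) = finrank ℂ (eigSp ρ ψ) := by
  rw [← eigSp_map_eq]
  let e : V ≃ₗ[ℂ] V := LinearEquiv.ofLinear (ρ h) (ρ h⁻¹)
    (by rw [← Module.End.mul_eq_comp, ← map_mul, mul_inv_cancel, map_one]; rfl)
    (by rw [← Module.End.mul_eq_comp, ← map_mul, inv_mul_cancel, map_one]; rfl)
  exact LinearEquiv.finrank_map_eq e (eigSp ρ ψ)

end Aux

theorem sum_char_eq_zero {M : Type*} [Group M] [Fintype M] {χ : M →* ℂˣ} (hχ : χ ≠ 1) :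
    ∑ m : M, (χ m : ℂ) = 0 := by
  refine sum_hom_units_eq_zero ((Units.coeHom ℂ).comp χ) ?_
  intro h
  apply hχ
  ext m
  have := DFunLike.congr_fun h m
  simpa using Units.ext (by simpa using this)

open Module in
theorem finrank_finset_sup {X V : Type*} [DecidableEq X] [AddCommGroup V] [Module ℂ V]
    [FiniteDimensional ℂ V]
    (T : Finset X) (E : X → Submodule ℂ V) (π : X → (V →ₗ[ℂ] V))
    (hid : ∀ x, ∀ v ∈ E x, π x v = v)
    (h0 : ∀ x y, x ≠ y → ∀ v ∈ E y, π x v = 0) :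
    finrank ℂ ↥(T.sup E) = ∑ x ∈ T, finrank ℂ (E x) := by
  induction T using Finset.induction_on with
  | empty => simp [finrank_bot]
  | insert _ _ ha =>
    rename_i a T ih
    rw [Finset.sup_insert, Finset.sum_insert ha, ← ih]
    have hdisj : E a ⊓ T.sup E = ⊥ := by
      rw [eq_bot_iff]
      rintro v ⟨hva, hvT⟩
      have h2 : T.sup E ≤ LinearMap.ker (π a) :=
        Finset.sup_le fun y hy => fun w hw =>
          LinearMap.mem_ker.2 (h0 a y (fun e => ha (e ▸ hy)) w hw)
      have : v = 0 := by rw [← hid a v hva]; exact LinearMap.mem_ker.1 (h2 hvT)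
      simp [Submodule.mem_bot, this]
    have hh := Submodule.finrank_sup_add_finrank_inf_eq (E a) (T.sup E)
    rw [hdisj, finrank_bot, add_zero] at hh
    exact hh

/-- The Klein four subgroup of `A₄`, as the set of elements of order dividing 2. -/
def K4 : Subgroup (alternatingGroup (Fin 4)) where
  carrier := {x | x * x = 1}
  one_mem' := by simp
  mul_mem' := by
    intro a b ha hb
    have key : ∀ x y : Equiv.Perm (Fin 4), Equiv.Perm.sign x = 1 → Equiv.Perm.sign y = 1 →
      x * x = 1 → y * y = 1 → (x*y)*(x*y) = 1 := by set_option maxRecDepth 100000 in decide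
    exact Subtype.ext (key a b (Equiv.Perm.mem_alternatingGroup.mp a.2)
      (Equiv.Perm.mem_alternatingGroup.mp b.2)
      (congrArg Subtype.val ha) (congrArg Subtype.val hb))
  inv_mem' := by
    intro a ha
    have h : a * a = 1 := ha
    show a⁻¹ * a⁻¹ = 1
    rw [← mul_inv_rev, h, inv_one]

instance K4_normal : K4.Normal := ⟨by
  intro x hx g
  have hx' : x * x = 1 := hx
  show (g * x * g⁻¹) * (g * x * g⁻¹) = 1
  calc (g * x * g⁻¹) * (g * x * g⁻¹) = g * (x * x) * g⁻¹ := by simp [mul_assoc]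
    _ = 1 := by rw [hx']; simp⟩

theorem K4_index : K4.index = 3 := by
  have h := K4.card_mul_index
  have h4 : Nat.card {x : alternatingGroup (Fin 4) // x * x = 1} = 4 := by
    rw [Nat.card_eq_fintype_card]; decide
  have h4' : Nat.card K4 = 4 := h4
  rw [h4', (by rw [Nat.card_eq_fintype_card]; decide :
    Nat.card (alternatingGroup (Fin 4)) = 12)] at h
  omega

open Module


/-- **(Guralnick–Liebeck, proof of Theorem 2.1, final step.)**
Let `H` be a finite group with a unique minimal normal subgroup `M`, where `M` is
elementary abelian of order `2^k`, `M ≤ Φ(H)`, and `H/M ≅ A_k`. Suppose `H` has a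
faithful irreducible complex representation `W` of dimension `< 2k` whose restriction to
`M` contains a nontrivial linear character. If every `H`-orbit on the nontrivial linear
characters of `M` has size `1`, `k`, or at least `k(k-1)/2`, then `dim W = k`. -/
theorem dim_eq_of_faithful_irreducible
    (k : ℕ)
    (H : Type*) [Group H] [Finite H]
    (M : Subgroup H) [hM : M.Normal] (hMne : M ≠ ⊥)
    -- `M` is the unique minimal normal subgroup of `H`
    (huniq : ∀ N : Subgroup H, N.Normal → N ≠ ⊥ → M ≤ N)
    -- `M` is elementary abelian of order `2^k`
    (hcard : Nat.card M = 2 ^ k) (helem : ∀ x ∈ M, x * x = 1)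
    -- `M` is contained in the Frattini subgroup
    (hfrat : M ≤ frattini H)
    (iso : H ⧸ M ≃* alternatingGroup (Fin k))
    -- a faithful irreducible complex representation `W = (V, ρ)` of dimension `< 2k`
    (V : Type*) [AddCommGroup V] [Module ℂ V] [FiniteDimensional ℂ V]
    (ρ : Representation ℂ H V)
    (hfaithful : Function.Injective ρ)
    (hirr : Nontrivial V ∧
      ∀ U : Submodule ℂ V, (∀ g, ∀ v ∈ U, ρ g v ∈ U) → U = ⊥ ∨ U = ⊤)
    (hdim : Module.finrank ℂ V < 2 * k)
    -- the restriction of `W` to `M` contains a nontrivial linear character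
    (hlin : ∃ (χ : M →* ℂˣ) (v : V), χ ≠ 1 ∧ v ≠ 0 ∧
      ∀ m : M, ρ (m : H) v = (χ m : ℂ) • v)
    -- every `H`-orbit on nontrivial linear characters of `M` has size `1`, `k`,
    -- or at least `k(k-1)/2`
    (horb : ∀ χ : M →* ℂˣ, χ ≠ 1 →
      Nat.card {χ' : M →* ℂˣ | ∃ h : H, χ' = conjChar M h χ} = 1 ∨
      Nat.card {χ' : M →* ℂˣ | ∃ h : H, χ' = conjChar M h χ} = k ∨
      k * (k - 1) / 2 ≤ Nat.card {χ' : M →* ℂˣ | ∃ h : H, χ' = conjChar M h χ}) :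
    Module.finrank ℂ V = k := by
  classical
  obtain ⟨hnontriv, hsimp⟩ := hirr
  obtain ⟨χ, v, hχ1, hv0, hχv⟩ := hlin
  have hk0 : k ≠ 0 := by
    rintro rfl
    rw [pow_zero] at hcard
    exact hMne (Subgroup.card_eq_one.mp hcard)
  haveI : Fintype M := Fintype.ofFinite M
  letI : MulAction H (M →* ℂˣ) :=
    { smul := fun h χ' => conjChar M h χ'
      one_smul := conjChar_one
      mul_smul := fun a b χ' => (conjChar_conjChar a b χ').symm }
  set O : Set (M →* ℂˣ) := {χ' : M →* ℂˣ | ∃ h : H, χ' = conjChar M h χ} with hOdef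
  have horbχ : Nat.card ↥O = 1 ∨ Nat.card ↥O = k ∨ k * (k-1) / 2 ≤ Nat.card ↥O :=
    horb χ hχ1
  set s := Nat.card ↥O with hsdef
  have hOorb : O = MulAction.orbit H χ := by
    ext ψ
    constructor
    · rintro ⟨h, rfl⟩; exact ⟨h, rfl⟩
    · rintro ⟨h, rfl⟩; exact ⟨h, rfl⟩
  have hOfin : O.Finite := hOorb ▸ Set.finite_range _
  set T : Finset (M →* ℂˣ) := hOfin.toFinset with hTdef
  have hTcard : T.card = s := by
    rw [hsdef, Nat.card_coe_set_eq, Set.ncard_eq_toFinset_card O hOfin]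
  have hmemT : ∀ ψ, ψ ∈ T ↔ ∃ h : H, ψ = conjChar M h χ := by
    intro ψ
    rw [hTdef, Set.Finite.mem_toFinset]
    rfl
  have hχT : χ ∈ T := (hmemT χ).2 ⟨1, (conjChar_one χ).symm⟩
  have hTclosed : ∀ ψ ∈ T, ∀ g : H, conjChar M g ψ ∈ T := by
    intro ψ hψ g
    obtain ⟨h, rfl⟩ := (hmemT ψ).1 hψ
    exact (hmemT _).2 ⟨g * h, (conjChar_conjChar g h χ)⟩
  have hvE : v ∈ eigSp ρ χ := fun m => hχv m
  set U := T.sup (eigSp ρ) with hUdef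
  have hUinv : ∀ g : H, ∀ w ∈ U, ρ g w ∈ U := by
    intro g w hw
    have hle : U ≤ Submodule.comap (ρ g) U := by
      apply Finset.sup_le
      intro ψ hψ w' hw'
      exact Finset.le_sup (f := eigSp ρ) (hTclosed ψ hψ g) (ρ_mem_eigSp ρ g hw')
    exact hle hw
  have hUtop : U = ⊤ := by
    rcases hsimp U hUinv with hbot | htop
    · exfalso
      have hvU : v ∈ U := Finset.le_sup (f := eigSp ρ) hχT hvE
      rw [hbot] at hvU
      exact hv0 ((Submodule.mem_bot ℂ).mp hvU)
    · exact htop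
  -- projections
  set prj : (M →* ℂˣ) → (V →ₗ[ℂ] V) :=
    fun ψ => ((Fintype.card M : ℂ))⁻¹ • ∑ m : M, (((ψ m)⁻¹ : ℂˣ) : ℂ) • (ρ (m : H))
    with hprj
  have hcM0 : (Fintype.card M : ℂ) ≠ 0 := Nat.cast_ne_zero.2 Fintype.card_pos.ne'
  have hid : ∀ ψ, ∀ w ∈ eigSp ρ ψ, prj ψ w = w := by
    intro ψ w hw
    have hterm : ∀ m : M, ((((ψ m)⁻¹ : ℂˣ) : ℂ) • ρ (m : H)) w = w := by
      intro m
      rw [LinearMap.smul_apply, hw m, smul_smul]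
      have h1 : (((ψ m)⁻¹ : ℂˣ) : ℂ) * ((ψ m : ℂˣ) : ℂ) = 1 := by
        rw [← Units.val_mul, inv_mul_cancel, Units.val_one]
      rw [h1, one_smul]
    have hsum : (∑ m : M, (((ψ m)⁻¹ : ℂˣ) : ℂ) • ρ (m : H)) w
        = (Fintype.card M : ℂ) • w := by
      rw [LinearMap.sum_apply, Finset.sum_congr rfl (fun m _ => hterm m),
        Finset.sum_const, Finset.card_univ, Nat.cast_smul_eq_nsmul]
    rw [hprj]
    simp only [LinearMap.smul_apply]
    rw [hsum, smul_smul, inv_mul_cancel₀ hcM0, one_smul]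
  have h0 : ∀ ψ ψ', ψ ≠ ψ' → ∀ w ∈ eigSp ρ ψ', prj ψ w = 0 := by
    intro ψ ψ' hne w hw
    have hne1 : ψ⁻¹ * ψ' ≠ 1 := by
      intro hcontra
      exact hne (inv_mul_eq_one.mp hcontra)
    have hterm : ∀ m : M, ((((ψ m)⁻¹ : ℂˣ) : ℂ) • ρ (m : H)) w
        = (((ψ⁻¹ * ψ') m : ℂˣ) : ℂ) • w := by
      intro m
      rw [LinearMap.smul_apply, hw m, smul_smul]
      congr 1
      try simp [MonoidHom.mul_apply, MonoidHom.inv_apply, Units.val_mul]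
    have hsum : (∑ m : M, (((ψ m)⁻¹ : ℂˣ) : ℂ) • ρ (m : H)) w = 0 := by
      rw [LinearMap.sum_apply, Finset.sum_congr rfl (fun m _ => hterm m),
        ← Finset.sum_smul, sum_char_eq_zero hne1, zero_smul]
    rw [hprj]
    simp only [LinearMap.smul_apply]
    rw [hsum, smul_zero]
  have hrank : finrank ℂ ↥U = ∑ ψ ∈ T, finrank ℂ (eigSp ρ ψ) :=
    finrank_finset_sup T (eigSp ρ) prj hid (fun x y hxy => h0 x y hxy)
  set e := finrank ℂ ↥(eigSp ρ χ) with hedef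
  have hall : ∀ ψ ∈ T, finrank ℂ ↥(eigSp ρ ψ) = e := by
    intro ψ hψ
    obtain ⟨h, rfl⟩ := (hmemT ψ).1 hψ
    exact finrank_eigSp_conj ρ h χ
  have hVse : finrank ℂ V = s * e := by
    have h1 : finrank ℂ ↥U = finrank ℂ V := by rw [hUtop]; exact finrank_top ℂ V
    rw [← h1, hrank, Finset.sum_congr rfl hall, Finset.sum_const, smul_eq_mul, hTcard]
  have he1 : e ≠ 0 := by
    intro h
    rw [hedef] at h
    have hb : eigSp ρ χ = ⊥ := Submodule.finrank_eq_zero.mp h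
    exact hv0 ((Submodule.mem_bot ℂ).mp (hb ▸ hvE))
  -- commutativity of M
  have hcomm : ∀ a ∈ M, ∀ b ∈ M, a * b = b * a := by
    intro a ha b hb
    have h1 : (a * b)⁻¹ = a * b := inv_eq_of_mul_eq_one_left (helem _ (mul_mem ha hb))
    have ha' : a⁻¹ = a := inv_eq_of_mul_eq_one_left (helem a ha)
    have hb' : b⁻¹ = b := inv_eq_of_mul_eq_one_left (helem b hb)
    calc a * b = (a * b)⁻¹ := h1.symm
      _ = b⁻¹ * a⁻¹ := mul_inv_rev a b
      _ = b * a := by rw [ha', hb']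
  -- the stabilizer
  set St := MulAction.stabilizer H χ with hStdef
  have hsSt : s = St.index := by
    calc s = Nat.card ↥(MulAction.orbit H χ) := by rw [hsdef, hOorb]
      _ = Nat.card (H ⧸ St) :=
          Nat.card_congr (MulAction.orbitEquivQuotientStabilizer H χ)
      _ = St.index := St.index_eq_card.symm
  have hMle : M ≤ St := by
    intro x hx
    show conjChar M x χ = χ
    ext m
    rw [conjChar_coe]
    refine congrArg (fun u : ℂˣ => (u : ℂ)) (congrArg χ (Subtype.ext ?_))
    show x⁻¹ * ↑m * x = ↑m
    have h := hcomm x hx m m.2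
    calc x⁻¹ * ↑m * x = x⁻¹ * (↑m * x) := by rw [mul_assoc]
      _ = x⁻¹ * (x * ↑m) := by rw [← h]
      _ = ↑m := inv_mul_cancel_left x ↑m
  have hsdvdA : s ∣ Nat.card (alternatingGroup (Fin k)) := by
    rw [hsSt]
    have h1 := Subgroup.index_dvd_of_le hMle
    have h2 : M.index = Nat.card (alternatingGroup (Fin k)) := by
      rw [Subgroup.index_eq_card]; exact Nat.card_congr iso.toEquiv
    rwa [h2] at h1
  -- consequence of orbit size 1
  have key1 : s = 1 → 2 ^ k ≤ 2 := by
    intro h1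
    have hT1 : T = {χ} := by
      obtain ⟨a, hA⟩ := Finset.card_eq_one.mp (by rw [hTcard, h1])
      have haχ : a = χ := (Finset.mem_singleton.mp (hA ▸ hχT)).symm
      rw [hA, haχ]
    have hEtop : eigSp ρ χ = ⊤ := by
      have hUE : U = eigSp ρ χ := by rw [hUdef, hT1, Finset.sup_singleton]
      rw [← hUE, hUtop]
    have hscal : ∀ (m : M) (w : V), ρ (m : H) w = (χ m : ℂ) • w := by
      intro m w
      have : w ∈ eigSp ρ χ := by rw [hEtop]; trivial
      exact this m
    have hker : ∀ m : M, χ m = 1 → m = 1 := by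
      intro m hm
      have hm' : ρ (m : H) = ρ (1 : H) := by
        rw [map_one]
        ext w
        rw [Module.End.one_apply, hscal m w, hm]
        simp
      have := hfaithful hm'
      exact Subtype.ext (by simpa using this)
    have hinj : Function.Injective χ := by
      intro a b hab
      have : a * b⁻¹ = 1 := hker _ (by rw [map_mul, map_inv, hab, mul_inv_cancel])
      exact mul_inv_eq_one.mp this
    have hpm : ∀ m : M, (χ m : ℂ) = 1 ∨ (χ m : ℂ) = -1 := by
      intro m
      have h2 : m * m = 1 := Subtype.ext (by simpa using helem (m : H) m.2)
      have : (χ m : ℂ) * (χ m : ℂ) = 1 := by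
        rw [← Units.val_mul, ← map_mul, h2, map_one, Units.val_one]
      exact mul_self_eq_one_iff.mp this
    have hinj2 : Function.Injective
        (fun m : M => @decide ((χ m : ℂ) = 1) (Classical.propDecidable _)) := by
      intro a b hab
      simp only [decide_eq_decide] at hab
      apply hinj
      apply Units.ext
      rcases hpm a with h | h <;> rcases hpm b with h' | h'
      · rw [h, h']
      · exact absurd (hab.mp h) (by rw [h']; norm_num)
      · exact absurd (hab.mpr h') (by rw [h]; norm_num)
      · rw [h, h']
    have hMcard : Nat.card M ≤ 2 := by
      have := Nat.card_le_card_of_injective _ hinj2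
      simpa [Nat.card_eq_fintype_card] using this
    rw [← hcard]
    exact hMcard
  -- final case analysis
  rcases horbχ with h1 | hsk | hbig
  · -- orbit size 1
    have h2k := key1 h1
    have hk1 : k = 1 := by
      by_contra hne
      have h2 : 2 ≤ k := by omega
      have : 2 ^ 2 ≤ 2 ^ k := Nat.pow_le_pow_right (by norm_num) h2
      omega
    subst hk1
    rw [hVse, h1, one_mul]
    rw [hVse, h1, one_mul] at hdim
    omega
  · -- orbit size k
    rw [hVse, hsk]
    rw [hVse, hsk] at hdim
    have he2 : e < 2 := by
      by_contra hcon
      push_neg at hcon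
      have : k * 2 ≤ k * e := Nat.mul_le_mul_left k hcon
      omega
    have : e = 1 := by omega
    rw [this, mul_one]
  · -- orbit size ≥ k(k-1)/2
    have hs_le : s ≤ finrank ℂ V := by
      rw [hVse]
      exact Nat.le_mul_of_pos_right s (Nat.pos_of_ne_zero he1)
    by_cases h5 : 5 ≤ k
    · exfalso
      have h4 : 4 ≤ k - 1 := by omega
      have h6 : k * 4 ≤ k * (k - 1) := Nat.mul_le_mul_left k h4
      have h7 : k * 4 / 2 ≤ k * (k - 1) / 2 := Nat.div_le_div_right h6
      have h8 : 2 * k ≤ k * (k - 1) / 2 := by omega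
      have := le_trans h8 hbig
      omega
    · push_neg at h5
      have hk1 : 1 ≤ k := by omega
      interval_cases k
      · -- k = 1
        have hA : Nat.card (alternatingGroup (Fin 1)) = 1 := by
          rw [Nat.card_eq_fintype_card]; decide
        rw [hA] at hsdvdA
        have hs1 : s = 1 := Nat.dvd_one.mp hsdvdA
        rw [hVse, hs1, one_mul]
        rw [hVse, hs1, one_mul] at hdim
        omega
      · -- k = 2 : contradiction
        exfalso
        have hA : Nat.card (alternatingGroup (Fin 2)) = 1 := by
          rw [Nat.card_eq_fintype_card]; decide
        rw [hA] at hsdvdA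
        have hs1 : s = 1 := Nat.dvd_one.mp hsdvdA
        have := key1 hs1
        norm_num at this
      · -- k = 3
        have hA : Nat.card (alternatingGroup (Fin 3)) = 3 := by
          rw [Nat.card_eq_fintype_card]; decide
        rw [hA] at hsdvdA
        have hsle3 : s ≤ 3 := Nat.le_of_dvd (by norm_num) hsdvdA
        norm_num at hbig
        have hs3 : s = 3 := by omega
        rw [hVse, hs3]
        rw [hVse, hs3] at hdim
        have : e = 1 := by omega
        rw [this, mul_one]
      · -- k = 4 : contradiction
        exfalso
        norm_num at hbig
        -- construct the Klein preimage Q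
        set π4 : H →* alternatingGroup (Fin 4) :=
          iso.toMonoidHom.comp (QuotientGroup.mk' M) with hπ4
        have hπsurj : Function.Surjective π4 :=
          iso.surjective.comp (QuotientGroup.mk'_surjective M)
        have hπker : ∀ x : H, π4 x = 1 ↔ x ∈ M := by
          intro x
          rw [hπ4]
          simp only [MonoidHom.comp_apply, MulEquiv.coe_toMonoidHom,
            QuotientGroup.mk'_apply]
          rw [MulEquiv.map_eq_one_iff]
          exact QuotientGroup.eq_one_iff x
        set Q := K4.comap π4 with hQ
        have hQM : M ≤ Q := by
          intro x hx
          show π4 x ∈ K4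
          rw [(hπker x).2 hx]
          exact one_mem _
        have hQn : Q.Normal := K4_normal.comap π4
        have hQ2 : IsPGroup 2 Q := by
          intro q
          refine ⟨2, ?_⟩
          have hqK : π4 (q : H) * π4 (q : H) = 1 := q.2
          have hq2 : ((q : H)) ^ 2 ∈ M := by
            apply (hπker _).1
            rw [map_pow, pow_two]
            exact hqK
          have h4 : ((q : H)) ^ (4 : ℕ) = 1 := by
            have hh := helem _ hq2
            calc ((q : H)) ^ (4 : ℕ) = (q : H) ^ 2 * (q : H) ^ 2 := by
                  rw [← pow_add]
              _ = 1 := hh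
          show q ^ ((2 : ℕ) ^ 2) = 1
          apply Subtype.ext
          have : ((q ^ ((2:ℕ)^2) : Q) : H) = ((q : H)) ^ ((2:ℕ)^2) := by
            push_cast
            rfl
          rw [this]
          norm_num
          exact h4
        letI : MulAction Q M :=
          { smul := fun q m => ⟨q * m * q⁻¹, hM.conj_mem m m.2 q⟩
            one_smul := by
              intro m
              ext
              show ((1 : Q) : H) * (m : H) * ((1 : Q) : H)⁻¹ = (m : H)
              simp
            mul_smul := by
              intro a b m
              ext
              show ((a * b : Q) : H) * (m : H) * ((a * b : Q) : H)⁻¹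
                  = (a : H) * ((b : H) * (m : H) * (b : H)⁻¹) * (a : H)⁻¹
              push_cast
              group }
        haveI : Fact (Nat.Prime 2) := ⟨Nat.prime_two⟩
        have hmod := hQ2.card_modEq_card_fixedPoints M
        rw [hcard] at hmod
        have hfx1 : (1 : M) ∈ MulAction.fixedPoints Q M := by
          intro q
          ext
          show (q : H) * ((1 : M) : H) * (q : H)⁻¹ = ((1 : M) : H)
          simp
        haveI : Nonempty ↥(MulAction.fixedPoints Q M) := ⟨⟨1, hfx1⟩⟩
        have hpos : 0 < Nat.card ↥(MulAction.fixedPoints Q M) := Nat.card_pos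
        have h2card : 2 ≤ Nat.card ↥(MulAction.fixedPoints Q M) := by
          have hmm : (2 ^ 4) % 2 = Nat.card ↥(MulAction.fixedPoints Q M) % 2 := hmod
          omega
        obtain ⟨m0, hm0fix, hm0ne'⟩ :
            ∃ m : M, m ∈ MulAction.fixedPoints Q M ∧ m ≠ 1 := by
          by_contra hcon
          push_neg at hcon
          have hsub : MulAction.fixedPoints Q M ⊆ {1} := fun m hm => hcon m hm
          have hle := Set.ncard_le_ncard hsub (Set.finite_singleton 1)
          rw [Set.ncard_singleton] at hle
          have h2card' : 2 ≤ (MulAction.fixedPoints Q M).ncard := by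
            rwa [← Nat.card_coe_set_eq]
          omega
        -- the centralizer-intersection subgroup
        set C : Subgroup H :=
          { carrier := {x | x ∈ M ∧ ∀ q ∈ Q, q * x * q⁻¹ = x}
            one_mem' := ⟨one_mem M, by intro q hq; simp⟩
            mul_mem' := by
              rintro a b ⟨haM, ha⟩ ⟨hbM, hb⟩
              refine ⟨mul_mem haM hbM, fun q hq => ?_⟩
              calc q * (a * b) * q⁻¹ = (q * a * q⁻¹) * (q * b * q⁻¹) := by group
                _ = a * b := by rw [ha q hq, hb q hq]
            inv_mem' := by
              rintro a ⟨haM, ha⟩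
              refine ⟨inv_mem haM, fun q hq => ?_⟩
              calc q * a⁻¹ * q⁻¹ = (q * a * q⁻¹)⁻¹ := by group
                _ = a⁻¹ := by rw [ha q hq] } with hC
        have hCn : C.Normal := by
          constructor
          intro x hx g
          refine ⟨hM.conj_mem x hx.1 g, fun q hq => ?_⟩
          have hq' : g⁻¹ * q * g ∈ Q := by
            have := hQn.conj_mem q hq g⁻¹
            simpa using this
          calc q * (g * x * g⁻¹) * q⁻¹
              = g * ((g⁻¹ * q * g) * x * (g⁻¹ * q * g)⁻¹) * g⁻¹ := by group
            _ = g * x * g⁻¹ := by rw [hx.2 _ hq']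
        have hCne : C ≠ ⊥ := by
          intro hbot
          have hmem : (m0 : H) ∈ C := by
            refine ⟨m0.2, fun q hq => ?_⟩
            have := hm0fix ⟨q, hq⟩
            exact Subtype.ext_iff.mp this
          rw [hbot] at hmem
          exact hm0ne' (Subtype.ext (by simpa using hmem))
        have hMC := huniq C hCn hCne
        have hQSt : Q ≤ St := by
          intro q hq
          show conjChar M q χ = χ
          ext m
          rw [conjChar_coe]
          refine congrArg (fun u : ℂˣ => (u : ℂ)) (congrArg χ (Subtype.ext ?_))
          show q⁻¹ * ↑m * q = ↑m
          have h1 := (hMC m.2).2 q⁻¹ (inv_mem hq)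
          simpa using h1
        have hdvd3 : s ∣ 3 := by
          rw [hsSt]
          have h1 := Subgroup.index_dvd_of_le hQSt
          rwa [hQ, Subgroup.index_comap_of_surjective _ hπsurj, K4_index] at h1
        have := Nat.le_of_dvd (by norm_num) hdvd3
        omega
end

section
/- With notation as before (p an odd prime dividing k, k ≥ 10, G = A_k, Y the stabilizer of {1,2}, θ the nontrivial 1-dimensional 𝔽_p Y-module), let M be the unique submodule of θ↑_Y^G with composition factors D^(k-2,1,1) and D^(k-1,1). Then H²(G, M) ≠ 0. -/
/-!
Concrete model: the induced module `θ↑_Y^G` (for `Y ≅ S_{k-2}` the stabilizer in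
`G = A_k` of `{1,2}` and `θ` its sign character) is the module of antisymmetric
functions on ordered pairs of distinct points; its unique submodule `M` with
composition factors `D^(k-2,1,1)` and `D^(k-1,1)` is the Specht module
`S^(k-2,1,1)`: the antisymmetric functions whose row sums vanish.
-/

open Equiv

/-- Permutation representation of `G` on `X → F` from an action of `G` on `X`. -/
def permRep (F G X : Type*) [CommRing F] [Group G] [MulAction G X] :
    Representation F G (X → F) where
  toFun g := LinearMap.funLeft F F (fun x => g⁻¹ • x)
  map_one' := by ext v x; simp
  map_mul' g h := by ext v x; simp [LinearMap.funLeft, mul_smul]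

variable {F G V : Type*} [CommRing F] [Group G] [AddCommGroup V] [Module F V]

/-- A submodule invariant under a representation. -/
def InvSub (ρ : Representation F G V) (U : Submodule F V) : Prop :=
  ∀ g, ∀ v ∈ U, ρ g v ∈ U

/-- An irreducible (simple) invariant submodule. -/
def IsIrreducibleSub (ρ : Representation F G V) (U : Submodule F V) : Prop :=
  InvSub ρ U ∧ U ≠ ⊥ ∧ ∀ W ≤ U, InvSub ρ W → W = ⊥ ∨ W = U

/-- The socle of the invariant submodule `S`: the sum of all irreducible invariant
submodules contained in `S`. -/
def socIn (ρ : Representation F G V) (S : Submodule F V) : Submodule F V :=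
  sSup {U | U ≤ S ∧ IsIrreducibleSub ρ U}

/-- The radical of the invariant submodule `S`: the intersection of all maximal proper
invariant submodules of `S` (so `S/radIn ρ S` is the head of `S`). -/
def radIn (ρ : Representation F G V) (S : Submodule F V) : Submodule F V :=
  sInf {U | U ≤ S ∧ InvSub ρ U ∧ U ≠ S ∧
    ∀ W, U ≤ W → W ≤ S → InvSub ρ W → W = U ∨ W = S}

/-- `S` is an indecomposable invariant submodule. -/
def IsIndecomposableSub (ρ : Representation F G V) (S : Submodule F V) : Prop :=
  ¬ ∃ U W : Submodule F V, InvSub ρ U ∧ InvSub ρ W ∧ U ≠ ⊥ ∧ W ≠ ⊥ ∧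
      U ⊓ W = ⊥ ∧ U ⊔ W = S

/-- The subrepresentation on an invariant submodule. -/
def subRep (ρ : Representation F G V) (U : Submodule F V)
    (hU : InvSub ρ U) : Representation F G U where
  toFun g := (ρ g).restrict (hU g)
  map_one' := by ext v; simp [LinearMap.restrict_apply]
  map_mul' g h := by ext v; simp [LinearMap.restrict_apply]

/-- The quotient representation on `V ⧸ U` for an invariant submodule `U`. -/
def quotRep (ρ : Representation F G V) (U : Submodule F V)
    (hU : InvSub ρ U) : Representation F G (V ⧸ U) where
  toFun g := U.mapQ U (ρ g) (fun v hv => hU g v hv)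
  map_one' := by
    refine Submodule.linearMap_qext _ ?_
    ext v; simp
  map_mul' g h := by
    refine Submodule.linearMap_qext _ ?_
    ext v; simp [Submodule.mapQ_apply]

/-- Ordered pairs of distinct elements of `Fin k`, i.e. `(k-2,1,1)`-tabloids. -/
def OP (k : ℕ) := {q : Fin k × Fin k // q.1 ≠ q.2}

instance (k : ℕ) : Fintype (OP k) := Subtype.fintype _
instance (k : ℕ) : DecidableEq (OP k) := Subtype.instDecidableEq

instance (k : ℕ) : MulAction (Equiv.Perm (Fin k)) (OP k) where
  smul g q := ⟨(g q.1.1, g q.1.2), fun hgq => q.2 (g.injective hgq)⟩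
  one_smul q := by cases q; rfl
  mul_smul g h q := by cases q; rfl

/-- Transposing an ordered pair. -/
def swapOP {k : ℕ} (q : OP k) : OP k := ⟨(q.1.2, q.1.1), fun h => q.2 h.symm⟩

/-- Antisymmetric functions on ordered pairs. -/
noncomputable def antisymSub (k : ℕ) (F : Type*) [CommRing F] : Submodule F (OP k → F) :=
  ⨅ q : OP k, LinearMap.ker
    ((LinearMap.proj q : (OP k → F) →ₗ[F] F) + LinearMap.proj (swapOP q))

/-- Functions on ordered pairs whose row sums vanish. -/
noncomputable def rowZeroSub (k : ℕ) (F : Type*) [CommRing F] : Submodule F (OP k → F) :=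
  ⨅ i : Fin k, LinearMap.ker
    (∑ q ∈ Finset.univ.filter (fun q : OP k => q.1.1 = i),
      (LinearMap.proj q : (OP k → F) →ₗ[F] F))

/-- The Specht module `S^(k-2,1,1)` inside the tabloid permutation module. -/
noncomputable def spechtHook (k : ℕ) (F : Type*) [CommRing F] : Submodule F (OP k → F) :=
  antisymSub k F ⊓ rowZeroSub k F

lemma antisym_inv (k : ℕ) (F : Type*) [CommRing F] :
    InvSub (permRep F (Equiv.Perm (Fin k)) (OP k)) (antisymSub k F) := by
  intro g v hv
  simp only [antisymSub, Submodule.mem_iInf, LinearMap.mem_ker, LinearMap.add_apply,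
    LinearMap.proj_apply] at hv ⊢
  intro q
  exact hv (g⁻¹ • q)

lemma rowZero_inv (k : ℕ) (F : Type*) [CommRing F] :
    InvSub (permRep F (Equiv.Perm (Fin k)) (OP k)) (rowZeroSub k F) := by
  intro g v hv
  simp only [rowZeroSub, Submodule.mem_iInf, LinearMap.mem_ker, LinearMap.sum_apply,
    LinearMap.proj_apply] at hv ⊢
  intro i
  rw [← hv (g⁻¹ i)]
  refine Finset.sum_nbij' (fun q => g⁻¹ • q) (fun q => g • q) ?_ ?_ ?_ ?_ ?_
  · intro q hq
    simp only [Finset.mem_filter, Finset.mem_univ, true_and] at hq ⊢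
    show g⁻¹ q.1.1 = g⁻¹ i
    rw [hq]
  · intro q hq
    simp only [Finset.mem_filter, Finset.mem_univ, true_and] at hq ⊢
    show g q.1.1 = i
    rw [hq]; simp
  · intro q _; exact smul_inv_smul g q
  · intro q _; exact inv_smul_smul g q
  · intro q _; rfl

lemma spechtHook_inv (k : ℕ) (F : Type*) [CommRing F] :
    InvSub (permRep F (Equiv.Perm (Fin k)) (OP k)) (spechtHook k F) :=
  fun g v hv => ⟨antisym_inv k F g v hv.1, rowZero_inv k F g v hv.2⟩


lemma spechtHook_inv_alt (k : ℕ) (F : Type*) [CommRing F] :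
    InvSub (permRep F (alternatingGroup (Fin k)) (OP k)) (spechtHook k F) :=
  fun g v hv => spechtHook_inv k F g v hv

/-- The submodule `M` of `θ↑_Y^G` with composition factors `D^(k-2,1,1)` and
`D^(k-1,1)`, as a representation of `A_k`. -/
noncomputable def Mrep (k p : ℕ) [Fact p.Prime] :
    Representation (ZMod p) (alternatingGroup (Fin k)) (spechtHook k (ZMod p)) :=
  subRep _ _ (spechtHook_inv_alt k (ZMod p))

namespace GLaux

open Finset

noncomputable section

/-- Row sums. -/
def rsum {k p : ℕ} (v : OP k → ZMod p) (i : Fin k) : ZMod p :=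
  ∑ q ∈ Finset.univ.filter (fun q : OP k => q.1.1 = i), v q

variable (k p : ℕ)

/-- Indicator function of `0`. -/
def e0 [NeZero k] : Fin k → ZMod p := fun i => if i = 0 then 1 else 0

/-- An explicit linear section of the row-sum map. -/
def Lmap [NeZero k] (z : Fin k → ZMod p) : OP k → ZMod p :=
  fun q => if q.1.2 = 0 then z q.1.1 else if q.1.1 = 0 then -z q.1.2 else 0

/-- The 1-cocycle `g • e₀ - e₀` with values in sum-zero functions. -/
def cf [NeZero k] (g : Equiv.Perm (Fin k)) : Fin k → ZMod p :=
  fun i => e0 k p (g⁻¹ i) - e0 k p i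

/-- Set-theoretic lift of `cf` along the row-sum map. -/
def aT [NeZero k] (g : Equiv.Perm (Fin k)) : OP k → ZMod p := Lmap k p (cf k p g)

variable {k p}

lemma mem_rowZero_iff (v : OP k → ZMod p) :
    v ∈ rowZeroSub k (ZMod p) ↔ ∀ i, rsum v i = 0 := by
  simp [rowZeroSub, rsum, Submodule.mem_iInf]

lemma mem_antisym_iff (v : OP k → ZMod p) :
    v ∈ antisymSub k (ZMod p) ↔ ∀ q, v q + v (swapOP q) = 0 := by
  simp [antisymSub, Submodule.mem_iInf]

lemma smul_OP_def (g : Equiv.Perm (Fin k)) (q : OP k) :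
    g • q = ⟨(g q.1.1, g q.1.2), fun h => q.2 (g.injective h)⟩ := rfl

lemma swapOP_smul (g : Equiv.Perm (Fin k)) (q : OP k) :
    swapOP (g • q) = g • swapOP q := rfl

lemma rsum_eq (v : OP k → ZMod p) (i : Fin k) :
    rsum v i = ∑ j : Fin k, if h : i ≠ j then v ⟨(i, j), h⟩ else 0 := by
  rw [rsum]
  rw [show (∑ j : Fin k, if h : i ≠ j then v ⟨(i, j), h⟩ else 0)
      = ∑ j ∈ Finset.univ.filter (fun j => i ≠ j), (if h : i ≠ j then v ⟨(i, j), h⟩ else 0) from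
    (Finset.sum_filter_of_ne (fun x _ hx => by by_contra hc; simp [hc] at hx)).symm]
  refine Finset.sum_bij' (fun q _ => q.1.2) (fun j hj => ⟨(i, j), by simpa using hj⟩) ?_ ?_ ?_ ?_ ?_
  · intro q hq
    simp only [Finset.mem_filter, Finset.mem_univ, true_and] at hq ⊢
    rw [← hq]; exact q.2
  · intro j hj; exact Finset.mem_filter.mpr ⟨Finset.mem_univ _, rfl⟩
  · intro q hq
    simp only [Finset.mem_filter, Finset.mem_univ, true_and] at hq
    exact Subtype.ext (Prod.ext hq.symm rfl)
  · intro j hj; rfl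
  · intro q hq
    simp only [Finset.mem_filter, Finset.mem_univ, true_and] at hq
    have hne : i ≠ q.1.2 := by rw [← hq]; exact q.2
    rw [dif_pos hne]
    congr 1
    exact Subtype.ext (Prod.ext hq rfl)

lemma rsum_Lmap [NeZero k] (z : Fin k → ZMod p) (hz : ∑ j, z j = 0) :
    rsum (Lmap k p z) = z := by
  funext i
  rw [rsum_eq]
  by_cases hi : i = 0
  · subst hi
    have : ∀ j : Fin k, (if h : (0:Fin k) ≠ j then Lmap k p z ⟨((0:Fin k), j), h⟩ else 0)
        = (if j = 0 then z j else 0) - z j := by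
      intro j
      by_cases hj : j = 0
      · subst hj; simp
      · rw [dif_pos (Ne.symm hj)]
        simp [Lmap, hj]
    simp only [this]
    rw [Finset.sum_sub_distrib, hz, Finset.sum_ite_eq' Finset.univ (0 : Fin k) z]
    simp
  · have : ∀ j : Fin k, (if h : i ≠ j then Lmap k p z ⟨(i, j), h⟩ else 0)
        = (if j = 0 then z i else 0) := by
      intro j
      by_cases hj : j = i
      · subst hj; simp [hi]
      · rw [dif_pos (fun hc => hj hc.symm)]
        simp only [Lmap]
        by_cases hj0 : j = 0
        · simp [hj0]
        · simp [hj0, hi]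
    simp only [this]
    rw [Finset.sum_ite_eq' Finset.univ (0 : Fin k) (fun _ => z i)]
    simp

lemma rsum_perm (g : Equiv.Perm (Fin k)) (v : OP k → ZMod p) (i : Fin k) :
    rsum (fun q => v (g⁻¹ • q)) i = rsum v (g⁻¹ i) := by
  rw [rsum_eq, rsum_eq]
  refine Fintype.sum_equiv (g⁻¹ : Equiv.Perm (Fin k)) _ _ ?_
  intro j
  by_cases h : i = j
  · subst h; simp
  · rw [dif_pos h, dif_pos (fun hc => h (g⁻¹.injective hc))]
    rfl

lemma sum_cf [NeZero k] (g : Equiv.Perm (Fin k)) : ∑ i, cf k p g i = 0 := by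
  simp only [cf, Finset.sum_sub_distrib]
  rw [Equiv.sum_comp (g⁻¹ : Equiv.Perm (Fin k)) (e0 k p)]
  simp

lemma rsum_aT [NeZero k] (g : Equiv.Perm (Fin k)) : rsum (aT k p g) = cf k p g :=
  rsum_Lmap _ (sum_cf g)

lemma aT_antisym [NeZero k] (g : Equiv.Perm (Fin k)) (q : OP k) :
    aT k p g q + aT k p g (swapOP q) = 0 := by
  obtain ⟨⟨i, j⟩, hij⟩ := q
  simp only [aT, Lmap, swapOP]
  by_cases hj : j = 0
  · subst hj; simp [hij]
  · by_cases hi : i = 0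
    · subst hi; simp [hj, Ne.symm hij]
    · simp [hi, hj]

end

end GLaux

namespace GLaux
noncomputable section
open Finset
open Fin.CommRing

lemma addRight_pow {k : ℕ} [NeZero k] (a : Fin k) (n : ℕ) :
    (Equiv.addRight a) ^ n = Equiv.addRight ((n : Fin k) * a) := by
  induction n with
  | zero => ext i; simp
  | succ n ih =>
    rw [pow_succ, ih]
    ext i
    simp only [Equiv.Perm.mul_apply, Equiv.coe_addRight]
    push_cast
    ring_nf

lemma addRight_one_eq (K : ℕ) : Equiv.addRight (1 : Fin (K + 1)) = finRotate (K + 1) := by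
  ext i
  simp [finRotate_succ_apply]

lemma addRight_mem_alternating {k p : ℕ} [NeZero k] (hodd : Odd p) (hpm : p * (k / p) = k) :
    Equiv.addRight ((k / p : ℕ) : Fin k) ∈ alternatingGroup (Fin k) := by
  obtain ⟨K, hK⟩ : ∃ K, k = K + 1 := ⟨k - 1, by have := NeZero.pos k; omega⟩
  subst hK
  rw [Equiv.Perm.mem_alternatingGroup]
  have h1 : Equiv.addRight (((K + 1) / p : ℕ) : Fin (K + 1))
      = (Equiv.addRight (1 : Fin (K + 1))) ^ ((K + 1) / p) := by
    rw [addRight_pow, mul_one]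
  rw [h1, map_pow, addRight_one_eq, sign_finRotate, ← pow_mul]
  refine Even.neg_one_pow ?_
  rcases Nat.even_or_odd (K + 1) with he | ho
  · have hm : Even ((K + 1) / p) := by
      rcases (Nat.even_mul.mp (hpm ▸ he)) with h | h
      · exact absurd h (by simpa [Nat.not_even_iff_odd] using hodd)
      · exact h
    exact hm.mul_left K
  · have : Even K := by
      rcases Nat.even_or_odd K with h | h
      · exact h
      · exact absurd (h.add_one) (by simpa [Nat.not_even_iff_odd] using ho)
    exact this.mul_right _
end
end GLaux

namespace GLaux
noncomputable section
open Finset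
open Fin.CommRing

lemma no_lift (k p : ℕ) [NeZero k] (hp : p.Prime) (hodd : Odd p) (hdvd : p ∣ k)
    (a : alternatingGroup (Fin k) → OP k → ZMod p)
    (hanti : ∀ g q, a g q + a g (swapOP q) = 0)
    (hrs : ∀ g, rsum (a g) = cf k p (g : Equiv.Perm (Fin k)))
    (hcoc : ∀ g h q, a (g * h) q = a g q + a h (((g : Equiv.Perm (Fin k)))⁻¹ • q)) :
    False := by
  haveI : NeZero p := ⟨hp.ne_zero⟩
  set m := k / p with hm_def
  have hpm : p * m = k := Nat.mul_div_cancel' hdvd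
  have hkpos : 0 < k := NeZero.pos k
  have hppos : 0 < p := hp.pos
  have hm : 0 < m := Nat.pos_of_ne_zero (fun h0 => by rw [h0, Nat.mul_zero] at hpm; omega)
  have hp2 : p ≠ 2 := by rintro rfl; exact absurd hodd (by decide)
  have hmk : m < k := by nlinarith [hp.two_le]
  set c : Fin k := ((m : ℕ) : Fin k) with hc_def
  have hcv : c.val = m := by rw [hc_def, Fin.val_natCast, Nat.mod_eq_of_lt hmk]
  -- the permutation σ
  have hsig_mem : Equiv.addRight c ∈ alternatingGroup (Fin k) :=
    addRight_mem_alternating hodd hpm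
  set σ : alternatingGroup (Fin k) := ⟨Equiv.addRight c, hsig_mem⟩ with hσ_def
  set τ : Equiv.Perm (Fin k) := (Equiv.addRight c)⁻¹ with hτ_def
  have hτ : ∀ i : Fin k, τ i = i - c := by
    intro i
    have : (Equiv.addRight c) (i - c) = i := by
      simp [Equiv.coe_addRight, sub_add_cancel]
    rw [hτ_def]
    exact (Equiv.symm_apply_eq _).mpr (by simpa [Equiv.coe_addRight] using this.symm)
  have hσp : σ ^ p = 1 := by
    apply Subtype.ext
    show (Equiv.addRight c) ^ p = 1
    rw [addRight_pow]
    have : ((p : ℕ) : Fin k) * c = 0 := by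
      rw [hc_def, ← Nat.cast_mul, hpm, Fin.natCast_self]
    rw [this]
    ext i; simp
  have hcoe_pow : ∀ t : ℕ, (((σ ^ t : alternatingGroup (Fin k)) : Equiv.Perm (Fin k)))⁻¹ = τ ^ t := by
    intro t
    rw [hτ_def, inv_pow]
    norm_cast
  -- the basic 1-cocycle values
  set x : OP k → ZMod p := a σ with hx_def
  have ha1 : ∀ q, a 1 q = 0 := by
    intro q
    have := hcoc 1 1 q
    simp only [mul_one] at this
    have h1 : ((1 : alternatingGroup (Fin k)) : Equiv.Perm (Fin k))⁻¹ • q = q := by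
      simp
    rw [h1] at this
    linear_combination -this
  have hiter : ∀ t q, a (σ ^ t) q = ∑ s ∈ range t, x ((τ ^ s) • q) := by
    intro t
    induction t with
    | zero => intro q; simpa using ha1 q
    | succ t ih =>
      intro q
      rw [pow_succ, hcoc (σ ^ t) σ q, ih q, hcoe_pow t, sum_range_succ]
  have hNorm : ∀ q, ∑ s ∈ range p, x ((τ ^ s) • q) = 0 := by
    intro q
    rw [← hiter p q, hσp, ha1]
  -- arithmetic on Fin k
  have hsub_ge : ∀ i : Fin k, m ≤ i.val → (i - c).val = i.val - m := by
    intro i hi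
    rw [Fin.sub_def]
    simp only [hcv]
    have h1 : k - m + i.val = k + (i.val - m) := by omega
    rw [h1, Nat.add_mod_left, Nat.mod_eq_of_lt (by omega)]
  have hsub_lt : ∀ i : Fin k, i.val < m → (i - c).val = i.val + (k - m) := by
    intro i hi
    rw [Fin.sub_def]
    simp only [hcv]
    rw [Nat.mod_eq_of_lt (by omega), Nat.add_comm]
  -- the depth function
  set Dd : Fin k → ℕ := fun i => i.val / m with hDd_def
  have hDlt : ∀ i, Dd i < p := by
    intro i
    rw [hDd_def]
    exact (Nat.div_lt_iff_lt_mul hm).mpr (by rw [hpm]; exact i.isLt)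
  have hD_ge : ∀ i : Fin k, m ≤ i.val → Dd (i - c) = Dd i - 1 := by
    intro i hi
    have hd1 : 1 ≤ Dd i := (Nat.one_le_div_iff hm).mpr hi
    obtain ⟨d', hd'⟩ : ∃ d', Dd i = d' + 1 := ⟨Dd i - 1, by omega⟩
    have hq : i.val / m = d' + 1 := hd'
    have he : i.val = m * (d' + 1) + i.val % m := by
      conv_lhs => rw [← Nat.div_add_mod i.val m]
      rw [hq]
    have he2 : i.val - m = m * d' + i.val % m := by
      refine Nat.sub_eq_of_eq_add ?_
      conv_lhs => rw [he]
      rw [Nat.mul_succ]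
      ring
    show (i - c).val / m = Dd i - 1
    rw [hsub_ge i hi, he2, Nat.mul_add_div hm, Nat.div_eq_of_lt (Nat.mod_lt _ hm), Nat.add_zero,
      hd', Nat.add_sub_cancel]
  have hD_lt : ∀ i : Fin k, i.val < m → Dd (i - c) = p - 1 := by
    intro i hi
    show (i - c).val / m = p - 1
    rw [hsub_lt i hi]
    have h1 : k - m = (p - 1) * m := by
      have := Nat.sub_one_mul p m
      omega
    rw [h1, Nat.add_mul_div_right _ _ hm, Nat.div_eq_of_lt hi, Nat.zero_add]
  -- first coordinate of τ-translates
  have hfst : ∀ q : OP k, (τ • q).1.1 = q.1.1 - c := fun q => hτ q.1.1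
  -- the primitive
  set w : OP k → ZMod p := fun q => -∑ s ∈ range (Dd q.1.1), x ((τ ^ s) • q) with hw_def
  have hstep : ∀ q, w (τ • q) - w q = x q := by
    intro q
    have hshift : ∀ n, ∑ s ∈ range n, x ((τ ^ s) • (τ • q)) = ∑ s ∈ range n, x ((τ ^ (s + 1)) • q) := by
      intro n
      refine Finset.sum_congr rfl fun s _ => ?_
      rw [smul_smul, ← pow_succ]
    by_cases hd : m ≤ q.1.1.val
    · have hD : Dd ((τ • q).1.1) = Dd q.1.1 - 1 := by rw [hfst]; exact hD_ge _ hd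
      have hd1 : 1 ≤ Dd q.1.1 := (Nat.one_le_div_iff hm).mpr hd
      obtain ⟨d', hd'⟩ : ∃ d', Dd q.1.1 = d' + 1 := ⟨Dd q.1.1 - 1, by omega⟩
      simp only [hw_def]
      rw [hD, hd', Nat.add_sub_cancel, hshift d', Finset.sum_range_succ' (fun s => x ((τ ^ s) • q)) d']
      simp [pow_zero, one_smul]
    · push_neg at hd
      have hDq : Dd q.1.1 = 0 := Nat.div_eq_of_lt hd
      have hD : Dd ((τ • q).1.1) = p - 1 := by rw [hfst]; exact hD_lt _ hd
      obtain ⟨p', hp'⟩ : ∃ p', p = p' + 1 := ⟨p - 1, by omega⟩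
      simp only [hw_def]
      have hps : p - 1 = p' := by omega
      rw [hD, hDq, hshift (p - 1), hps]
      have hN := hNorm q
      have hrg : Finset.range p = Finset.range (p' + 1) := by rw [hp']
      rw [hrg, Finset.sum_range_succ' (fun s => x ((τ ^ s) • q)) p'] at hN
      simp only [pow_zero, one_smul] at hN
      simp only [Finset.range_zero, Finset.sum_empty, neg_zero, sub_zero]
      linear_combination -hN
  -- antisymmetry of x
  have hxswap : ∀ q, x (swapOP q) = -x q := by
    intro q
    have h := hanti σ q
    linear_combination h
  set w2 : OP k → ZMod p := fun q => -w (swapOP q) with hw2_def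
  have hswapτ : ∀ q : OP k, swapOP (τ • q) = τ • swapOP q := fun q => rfl
  have hstep2 : ∀ q, w2 (τ • q) - w2 q = x q := by
    intro q
    simp only [hw2_def]
    rw [hswapτ]
    have h1 := hstep (swapOP q)
    have h2 := hxswap q
    linear_combination -h1 - h2
  set W : OP k → ZMod p := fun q => w q + w2 q with hW_def
  have hstepW : ∀ q, W (τ • q) - W q = x q + x q := by
    intro q
    simp only [hW_def]
    linear_combination hstep q + hstep2 q
  set z : Fin k → ZMod p := rsum W with hz_def
  have hτcoe : ((σ : Equiv.Perm (Fin k)))⁻¹ = τ := by rw [hτ_def]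
  have hzstep : ∀ i, z (τ i) - z i
      = cf k p (σ : Equiv.Perm (Fin k)) i + cf k p (σ : Equiv.Perm (Fin k)) i := by
    intro i
    have h1 : rsum (fun q => W (τ • q)) i = rsum W (τ i) := by
      have h := rsum_perm (τ⁻¹) W i
      simpa using h
    have h2 : rsum (fun q => W (τ • q)) i - rsum W i = rsum (fun q => W (τ • q) - W q) i := by
      simp [rsum, Finset.sum_sub_distrib]
    have h3 : rsum (fun q => W (τ • q) - W q) i = rsum (fun q => x q + x q) i :=
      Finset.sum_congr rfl fun q _ => hstepW q
    have h4 : rsum (fun q => x q + x q) i = rsum x i + rsum x i := by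
      simp [rsum, Finset.sum_add_distrib]
    have h5 : rsum x i = cf k p (σ : Equiv.Perm (Fin k)) i := by
      rw [hx_def, hrs σ]
    rw [hz_def, ← h1]
    linear_combination h2 + h3 + h4 + h5 + h5
  set u : Fin k → ZMod p := fun i => (e0 k p i + e0 k p i) - z i with hu_def
  have hcfτ : ∀ i, cf k p (σ : Equiv.Perm (Fin k)) i = e0 k p (τ i) - e0 k p i := by
    intro i
    rw [cf, hτcoe]
  have hu : ∀ i, u (τ i) = u i := by
    intro i
    simp only [hu_def]
    have h := hzstep i
    rw [hcfτ i] at h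
    linear_combination -h
  have huc : ∀ i, u (i + c) = u i := by
    intro i
    have h := hu (i + c)
    rw [hτ (i + c), add_sub_cancel_right] at h
    exact h.symm
  -- total sum of u, first way
  have hsum_e0 : ∑ i, e0 k p i = 1 := by
    simp only [e0]
    rw [Finset.sum_ite_eq' Finset.univ (0 : Fin k) (fun _ => (1 : ZMod p))]
    simp
  have hsum_z : ∑ i, z i = 0 := by
    have h1 : ∑ i, z i = ∑ q : OP k, W q := by
      rw [hz_def]
      simp only [rsum]
      exact Finset.sum_fiberwise Finset.univ (fun q : OP k => q.1.1) W
    have h2 : ∑ q : OP k, w (swapOP q) = ∑ q : OP k, w q :=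
      Fintype.sum_bijective swapOP
        (Function.bijective_iff_has_inverse.mpr ⟨swapOP, fun q => rfl, fun q => rfl⟩)
        _ _ (fun q => rfl)
    have h3 : ∑ q : OP k, W q = ∑ q : OP k, w q - ∑ q : OP k, w (swapOP q) := by
      rw [← Finset.sum_sub_distrib]
      refine Finset.sum_congr rfl fun q _ => ?_
      simp only [hW_def, hw2_def]
      ring
    rw [h1, h3, h2, sub_self]
  have hsum_u : ∑ i, u i = (1 : ZMod p) + 1 := by
    simp only [hu_def]
    rw [Finset.sum_sub_distrib, Finset.sum_add_distrib, hsum_e0, hsum_z]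
    ring
  -- total sum of u, second way
  set ub : ℕ → ZMod p := fun n => u ((n : ℕ) : Fin k) with hub_def
  have hubv : ∀ i : Fin k, u i = ub i.val := by
    intro i
    simp only [hub_def, Fin.cast_val_eq_self]
  have hubm : ∀ n, ub (n + m) = ub n := by
    intro n
    simp only [hub_def]
    push_cast
    exact huc _
  have hub_lin : ∀ s t, ub (s * m + t) = ub t := by
    intro s
    induction s with
    | zero => intro t; simp
    | succ s ih =>
      intro t
      have harr : (s + 1) * m + t = (s * m + t) + m := by ring
      rw [harr, hubm, ih]
  have hsum_u2 : ∑ i, u i = 0 := by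
    have h0 : ∑ i : Fin k, u i = ∑ n ∈ Finset.range k, ub n := by
      rw [← Fin.sum_univ_eq_sum_range ub k]
      exact Finset.sum_congr rfl fun i _ => hubv i
    have h1 : ∑ n ∈ Finset.range k, ub n
        = ∑ st ∈ Finset.range p ×ˢ Finset.range m, ub (st.1 * m + st.2) := by
      refine Finset.sum_bij' (fun n _ => (n / m, n % m)) (fun st _ => st.1 * m + st.2) ?_ ?_ ?_ ?_ ?_
      · intro n hn
        rw [Finset.mem_range] at hn
        rw [Finset.mem_product, Finset.mem_range, Finset.mem_range]
        exact ⟨(Nat.div_lt_iff_lt_mul hm).mpr (by rw [hpm]; exact hn), Nat.mod_lt _ hm⟩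
      · intro st hst
        rw [Finset.mem_product, Finset.mem_range, Finset.mem_range] at hst
        rw [Finset.mem_range]
        calc st.1 * m + st.2 < st.1 * m + m := by omega
          _ = (st.1 + 1) * m := by ring
          _ ≤ p * m := Nat.mul_le_mul_right m (by omega)
          _ = k := hpm
      · intro n hn
        simp only
        rw [Nat.div_add_mod']
      · intro st hst
        rw [Finset.mem_product, Finset.mem_range, Finset.mem_range] at hst
        have hd : (st.1 * m + st.2) / m = st.1 := by
          rw [Nat.add_comm, Nat.add_mul_div_right _ _ hm, Nat.div_eq_of_lt hst.2, Nat.zero_add]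
        have hmo : (st.1 * m + st.2) % m = st.2 := by
          rw [Nat.add_comm, Nat.add_mul_mod_self_right, Nat.mod_eq_of_lt hst.2]
        rw [hd, hmo]
      · intro n hn
        simp only
        rw [Nat.div_add_mod']
    have h2 : ∑ st ∈ Finset.range p ×ˢ Finset.range m, ub (st.1 * m + st.2)
        = ∑ s ∈ Finset.range p, ∑ t ∈ Finset.range m, ub t := by
      rw [Finset.sum_product]
      exact Finset.sum_congr rfl fun s _ => Finset.sum_congr rfl fun t _ => hub_lin s t
    rw [h0, h1, h2, Finset.sum_const, Finset.card_range, nsmul_eq_mul, ZMod.natCast_self,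
      zero_mul]
  -- contradiction
  have h2z : ((2 : ℕ) : ZMod p) = 0 := by
    push_cast
    rw [← hsum_u2, hsum_u]
    ring
  have hdvd2 : p ∣ 2 := (ZMod.natCast_eq_zero_iff 2 p).mp h2z
  exact hp2 ((Nat.prime_dvd_prime_iff_eq hp Nat.prime_two).mp hdvd2)

end
end GLaux

namespace GLaux
noncomputable section
open Finset

variable (k p : ℕ)

/-- The explicit 2-cocycle with values in the Specht module. -/
def bval [NeZero k] (g h : alternatingGroup (Fin k)) : OP k → ZMod p := fun q =>
  aT k p ↑g q + aT k p ↑h (((g : Equiv.Perm (Fin k)))⁻¹ • q) - aT k p ↑(g * h) q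

variable {k p}

lemma aT_mem_antisym [NeZero k] (g : Equiv.Perm (Fin k)) :
    aT k p g ∈ antisymSub k (ZMod p) :=
  (mem_antisym_iff _).mpr (aT_antisym g)

lemma bval_mem [NeZero k] (g h : alternatingGroup (Fin k)) :
    bval k p g h ∈ spechtHook k (ZMod p) := by
  rw [spechtHook, Submodule.mem_inf]
  constructor
  · rw [mem_antisym_iff]
    intro q
    have h1 := aT_antisym (p := p) (g : Equiv.Perm (Fin k)) q
    have h2 := aT_antisym (p := p) (h : Equiv.Perm (Fin k)) (((g : Equiv.Perm (Fin k)))⁻¹ • q)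
    have h3 := aT_antisym (p := p) ((g * h : alternatingGroup (Fin k)) : Equiv.Perm (Fin k)) q
    have hsw : swapOP (((g : Equiv.Perm (Fin k)))⁻¹ • q)
        = ((g : Equiv.Perm (Fin k)))⁻¹ • swapOP q := rfl
    simp only [bval]
    rw [← hsw]
    linear_combination h1 + h2 - h3
  · rw [mem_rowZero_iff]
    intro i
    have hsplit : rsum (bval k p g h) i
        = rsum (aT k p ↑g) i + rsum (fun q => aT k p ↑h (((g : Equiv.Perm (Fin k)))⁻¹ • q)) i
          - rsum (aT k p ↑(g * h)) i := by
      simp [rsum, bval, Finset.sum_add_distrib, Finset.sum_sub_distrib]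
    rw [hsplit, rsum_perm, rsum_aT, rsum_aT, rsum_aT]
    have hmul : ((g * h : alternatingGroup (Fin k)) : Equiv.Perm (Fin k))⁻¹ i
        = ((h : Equiv.Perm (Fin k)))⁻¹ (((g : Equiv.Perm (Fin k)))⁻¹ i) := by
      simp [mul_inv_rev]
    simp only [cf, hmul]
    ring

lemma Mrep_coe [Fact p.Prime] (g : alternatingGroup (Fin k)) (v : spechtHook k (ZMod p)) :
    ((Mrep k p g v : spechtHook k (ZMod p)) : OP k → ZMod p)
      = fun q => (v : OP k → ZMod p) (g⁻¹ • q) := rfl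

/-- The 2-cocycle as an element of `twoCocycles`. -/
def Bcoc [NeZero k] [Fact p.Prime] :
    groupCohomology.cocycles₂ (Rep.of (Mrep k p)) := by
  refine ⟨fun gh => ⟨bval k p gh.1 gh.2, bval_mem gh.1 gh.2⟩, ?_⟩
  rw [groupCohomology.mem_cocycles₂_def]
  intro g h j
  apply Subtype.ext
  funext q
  show bval k p h j (g⁻¹ • q) - bval k p (g * h) j q + bval k p g (h * j) q
      - bval k p g h q = 0
  simp only [bval]
  have e1 : ((g⁻¹ : alternatingGroup (Fin k)) : Equiv.Perm (Fin k)) • q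
      = ((g : Equiv.Perm (Fin k)))⁻¹ • q := rfl
  have e2 : ∀ q' : OP k, ((h : Equiv.Perm (Fin k)))⁻¹ • (((g : Equiv.Perm (Fin k)))⁻¹ • q')
      = (((g * h : alternatingGroup (Fin k)) : Equiv.Perm (Fin k)))⁻¹ • q' := by
    intro q'
    rw [smul_smul, ← mul_inv_rev]
    rfl
  have e3 : g⁻¹ • q = ((g : Equiv.Perm (Fin k)))⁻¹ • q := rfl
  have e4 : g * h * j = g * (h * j) := mul_assoc g h j
  rw [e3, e2, e4]
  ring

end
end GLaux


/-- **(Guralnick–Liebeck, Lemma 3.2(ii)(a).)** Let `p` be an odd prime dividing `k`,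
`k ≥ 10`, `G = A_k`, `Y` the stabilizer of `{1,2}`, and `θ` the nontrivial 1-dimensional
`𝔽_p Y`-module. Let `M` be the (unique) submodule of the induced module `θ↑_Y^G` with
composition factors `D^(k-2,1,1)` and `D^(k-1,1)` (concretely: the antisymmetric
functions on ordered pairs whose row sums vanish). Then `H²(G, M) ≠ 0`. -/
theorem H2_of_M_nontrivial (k p : ℕ) (hk : 10 ≤ k) (hp : p.Prime) [Fact p.Prime]
    (hodd : Odd p) (hdvd : p ∣ k) :
    Nontrivial (groupCohomology (Rep.of (Mrep k p)) 2) := by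
  haveI : NeZero k := ⟨by omega⟩
  have hB : ⇑(GLaux.Bcoc : groupCohomology.cocycles₂ (Rep.of (Mrep k p)))
      ∉ groupCohomology.coboundaries₂ (Rep.of (Mrep k p)) := by
    intro hmem
    obtain ⟨xf0, hxf⟩ := hmem
    let xf : alternatingGroup (Fin k) → ↥(spechtHook k (ZMod p)) := xf0
    refine GLaux.no_lift k p hp hodd hdvd
      (fun g q => GLaux.aT k p ↑g q - (xf g).1 q)
      ?_ ?_ ?_
    · intro g q
      have h1 := GLaux.aT_antisym (p := p) (g : Equiv.Perm (Fin k)) q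
      have hm : (xf g).1 ∈ antisymSub k (ZMod p) ⊓ rowZeroSub k (ZMod p) := (xf g).2
      have h2 := (GLaux.mem_antisym_iff _).mp ((Submodule.mem_inf).mp hm).1 q
      linear_combination h1 - h2
    · intro g
      funext i
      have hm : (xf g).1 ∈ antisymSub k (ZMod p) ⊓ rowZeroSub k (ZMod p) := (xf g).2
      have h0 : GLaux.rsum (xf g).1 i = 0 :=
        (GLaux.mem_rowZero_iff _).mp ((Submodule.mem_inf).mp hm).2 i
      have hsplit : GLaux.rsum
            (fun q => GLaux.aT k p ↑g q - (xf g).1 q) i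
          = GLaux.rsum (GLaux.aT k p ↑g) i - GLaux.rsum (xf g).1 i := by
        simp [GLaux.rsum, Finset.sum_sub_distrib]
      rw [hsplit, GLaux.rsum_aT, h0, sub_zero]
    · intro g h q
      have hval := congrFun (congrArg Subtype.val (congrFun hxf (g, h))) q
      have hval' : (xf h).1 (g⁻¹ • q) - (xf (g * h)).1 q + (xf g).1 q
          = GLaux.bval k p g h q := hval
      have e3 : g⁻¹ • q = ((g : Equiv.Perm (Fin k)))⁻¹ • q := rfl
      simp only [GLaux.bval] at hval'
      rw [e3] at hval'
      linear_combination hval'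
  haveI hNT : Nontrivial (groupCohomology.H2 (Rep.of (Mrep k p))) := by
    refine ⟨⟨groupCohomology.H2π _ GLaux.Bcoc, 0, fun hc => hB ?_⟩⟩
    exact (groupCohomology.H2π_eq_zero_iff _).mp hc
  exact hNT
end

section
/- With the same notation, the restriction of M to Y decomposes as M|_Y ≅ θ ⊕ M₀ for some 𝔽_p Y-module M₀; in particular M has a Y-invariant hyperplane M₀ with M/M₀ ≅ θ as Y-modules. -/
/-!
Concrete model: the induced module `θ↑_Y^G` (for `Y ≅ S_{k-2}` the stabilizer in
`G = A_k` of `{1,2}` and `θ` its sign character) is the module of antisymmetric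
functions on ordered pairs of distinct points; its unique submodule `M` with
composition factors `D^(k-2,1,1)` and `D^(k-1,1)` is the Specht module
`S^(k-2,1,1)`: the antisymmetric functions whose row sums vanish.
-/

open Equiv

variable {F G V : Type*} [CommRing F] [Group G] [AddCommGroup V] [Module F V]

open Pointwise

/-- The set of 2-element subsets of `{1,…,k}`. -/
def Xk (k : ℕ) := {s : Finset (Fin k) // s.card = 2}

instance (k : ℕ) : Fintype (Xk k) := Subtype.fintype _
instance (k : ℕ) : DecidableEq (Xk k) := Subtype.instDecidableEq

instance (k : ℕ) : MulAction (Equiv.Perm (Fin k)) (Xk k) where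
  smul g s := ⟨g • s.1, by rw [Finset.card_smul_finset]; exact s.2⟩
  one_smul s := Subtype.ext (one_smul _ s.1)
  mul_smul g h s := Subtype.ext (mul_smul g h s.1)

/-- The 2-subset `{1,2}` (i.e. `{0,1}` in `Fin k`). -/
def pair01 (k : ℕ) (hk : 2 ≤ k) : Xk k :=
  ⟨{⟨0, by omega⟩, ⟨1, by omega⟩}, Finset.card_pair (by simp [Fin.ext_iff])⟩

/-- The value at `y` of the sign character `θ` of `Y ≅ S_{k-2}` (the stabilizer of
`{1,2}`): for `y ∈ Y ≤ A_k`, `θ(y) = 1` if `y` fixes the points `1,2` and `θ(y) = -1`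
if `y` interchanges them. -/
def thetaChar (k : ℕ) (hk : 2 ≤ k) (F : Type*) [CommRing F] (y : Equiv.Perm (Fin k)) : F :=
  if y ⟨0, by omega⟩ = ⟨0, by omega⟩ then 1 else -1


/-! ### Auxiliary constructions for the proof -/

def pt0 (k : ℕ) (hk : 2 ≤ k) : Fin k := ⟨0, by omega⟩
def pt1 (k : ℕ) (hk : 2 ≤ k) : Fin k := ⟨1, by omega⟩

lemma pt0_ne_pt1 (k : ℕ) (hk : 2 ≤ k) : pt0 k hk ≠ pt1 k hk := by
  simp [pt0, pt1, Fin.ext_iff]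

/-- The distinguished ordered pair `(0,1)`. -/
def op01 (k : ℕ) (hk : 2 ≤ k) : OP k := ⟨(pt0 k hk, pt1 k hk), pt0_ne_pt1 k hk⟩

/-- The "column" function `c` with `c 0 = 1`, `c 1 = -1`, `c j = 0` otherwise. -/
def cfun (k : ℕ) (hk : 2 ≤ k) (F : Type*) [CommRing F] (x : Fin k) : F :=
  (if x = pt0 k hk then 1 else 0) + (if x = pt1 k hk then -1 else 0)

/-- The distinguished vector spanning the `θ`-line in `M`. -/
def wvec (k : ℕ) (hk : 2 ≤ k) (F : Type*) [CommRing F] : OP k → F :=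
  fun q => cfun k hk F q.1.1 - cfun k hk F q.1.2

lemma sum_cfun (k : ℕ) (hk : 2 ≤ k) (F : Type*) [CommRing F] :
    ∑ x : Fin k, cfun k hk F x = 0 := by
  simp [cfun, Finset.sum_add_distrib, Finset.sum_ite_eq']

lemma cfun_fix (k : ℕ) (hk : 2 ≤ k) (F : Type*) [CommRing F] (σ : Equiv.Perm (Fin k))
    (h0 : σ (pt0 k hk) = pt0 k hk) (h1 : σ (pt1 k hk) = pt1 k hk) (x : Fin k) :
    cfun k hk F (σ x) = cfun k hk F x := by
  unfold cfun
  have i0 : σ x = pt0 k hk ↔ x = pt0 k hk :=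
    ⟨fun h => σ.injective (h.trans h0.symm), fun h => h ▸ h0⟩
  have i1 : σ x = pt1 k hk ↔ x = pt1 k hk :=
    ⟨fun h => σ.injective (h.trans h1.symm), fun h => h ▸ h1⟩
  simp only [i0, i1]

lemma cfun_swp (k : ℕ) (hk : 2 ≤ k) (F : Type*) [CommRing F] (σ : Equiv.Perm (Fin k))
    (h0 : σ (pt0 k hk) = pt1 k hk) (h1 : σ (pt1 k hk) = pt0 k hk) (x : Fin k) :
    cfun k hk F (σ x) = -cfun k hk F x := by
  unfold cfun
  have i0 : σ x = pt0 k hk ↔ x = pt1 k hk :=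
    ⟨fun h => σ.injective (h.trans h1.symm), fun h => h ▸ h1⟩
  have i1 : σ x = pt1 k hk ↔ x = pt0 k hk :=
    ⟨fun h => σ.injective (h.trans h0.symm), fun h => h ▸ h0⟩
  simp only [i0, i1]
  have hne := pt0_ne_pt1 k hk
  by_cases hx0 : x = pt0 k hk <;> by_cases hx1 : x = pt1 k hk <;>
    simp [hx0, hx1, hne, hne.symm]

lemma wvec_mem_antisym (k : ℕ) (hk : 2 ≤ k) (F : Type*) [CommRing F] :
    wvec k hk F ∈ antisymSub k F := by
  simp only [antisymSub, Submodule.mem_iInf, LinearMap.mem_ker, LinearMap.add_apply,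
    LinearMap.proj_apply]
  intro q
  show wvec k hk F q + wvec k hk F (swapOP q) = 0
  unfold wvec swapOP
  ring

lemma wvec_mem_rowZero (k : ℕ) (hk : 2 ≤ k) (F : Type*) [CommRing F] (hkF : (k : F) = 0) :
    wvec k hk F ∈ rowZeroSub k F := by
  simp only [rowZeroSub, Submodule.mem_iInf, LinearMap.mem_ker, LinearMap.sum_apply,
    LinearMap.proj_apply]
  intro i
  have key : ∑ q ∈ Finset.univ.filter (fun q : OP k => q.1.1 = i), wvec k hk F q
      = ∑ b ∈ Finset.univ.erase i, (cfun k hk F i - cfun k hk F b) := by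
    refine Finset.sum_bij (fun q _ => q.1.2) ?_ ?_ ?_ ?_
    · intro q hq
      simp only [Finset.mem_filter, Finset.mem_univ, true_and] at hq
      simp only [Finset.mem_erase, Finset.mem_univ, and_true]
      exact fun h => q.2 (hq.trans h.symm)
    · intro q1 h1 q2 h2 h
      simp only [Finset.mem_filter, Finset.mem_univ, true_and] at h1 h2
      exact Subtype.ext (Prod.ext (h1.trans h2.symm) h)
    · intro b hb
      simp only [Finset.mem_erase, Finset.mem_univ, and_true] at hb
      exact ⟨⟨(i, b), fun h => hb h.symm⟩, Finset.mem_filter.2 ⟨Finset.mem_univ _, rfl⟩, rfl⟩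
    · intro q hq
      simp only [Finset.mem_filter, Finset.mem_univ, true_and] at hq
      unfold wvec
      rw [hq]
  rw [key, Finset.sum_sub_distrib, Finset.sum_const,
    Finset.sum_erase_eq_sub (Finset.mem_univ i), sum_cfun,
    Finset.card_erase_of_mem (Finset.mem_univ i)]
  simp only [Finset.card_univ, Fintype.card_fin, zero_sub, sub_neg_eq_add, nsmul_eq_mul]
  have h2 : ((k - 1 : ℕ) : F) = (k : F) - 1 := by
    have : (k - 1) + 1 = k := by omega
    calc ((k - 1 : ℕ) : F) = ((k - 1 : ℕ) : F) + 1 - 1 := by ring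
    _ = (((k - 1) + 1 : ℕ) : F) - 1 := by push_cast; ring
    _ = (k : F) - 1 := by rw [this]
  rw [h2, hkF]
  ring

lemma stab_cases (k : ℕ) (hk : 2 ≤ k) (σ : Equiv.Perm (Fin k))
    (h : σ • (pair01 k hk) = pair01 k hk) :
    (σ (pt0 k hk) = pt0 k hk ∧ σ (pt1 k hk) = pt1 k hk) ∨
    (σ (pt0 k hk) = pt1 k hk ∧ σ (pt1 k hk) = pt0 k hk) := by
  have hset : σ • (pair01 k hk).1 = (pair01 k hk).1 := congrArg Subtype.val h
  have hmem : ∀ x ∈ (pair01 k hk).1, σ x ∈ (pair01 k hk).1 := by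
    intro x hx
    rw [← hset]
    exact Finset.smul_mem_smul_finset hx
  have h0 : pt0 k hk ∈ (pair01 k hk).1 := by simp [pair01, pt0]
  have h1 : pt1 k hk ∈ (pair01 k hk).1 := by simp [pair01, pt1]
  have m0 := hmem _ h0
  have m1 := hmem _ h1
  simp only [pair01, Finset.mem_insert, Finset.mem_singleton] at m0 m1
  have m0' : σ (pt0 k hk) = pt0 k hk ∨ σ (pt0 k hk) = pt1 k hk := m0
  have m1' : σ (pt1 k hk) = pt0 k hk ∨ σ (pt1 k hk) = pt1 k hk := m1
  have hne : σ (pt0 k hk) ≠ σ (pt1 k hk) := fun h => pt0_ne_pt1 k hk (σ.injective h)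
  rcases m0' with e0 | e0 <;> rcases m1' with e1 | e1
  · exact absurd (e0.trans e1.symm) hne
  · exact Or.inl ⟨e0, e1⟩
  · exact Or.inr ⟨e0, e1⟩
  · exact absurd (e0.trans e1.symm) hne

lemma antisym_apply {k : ℕ} {F : Type*} [CommRing F] {v : OP k → F}
    (hv : v ∈ antisymSub k F) (q : OP k) : v q + v (swapOP q) = 0 := by
  simp only [antisymSub, Submodule.mem_iInf, LinearMap.mem_ker, LinearMap.add_apply,
    LinearMap.proj_apply] at hv
  exact hv q

/-- **(Guralnick–Liebeck, Lemma 3.2(ii)(b).)** Let `p` be an odd prime dividing `k`,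
`k ≥ 10`, `G = A_k`, `Y` the stabilizer in `G` of `{1,2}`, `θ` the nontrivial
1-dimensional `𝔽_p Y`-module, and `M` the submodule of `θ↑_Y^G` with composition factors
`D^(k-2,1,1)` and `D^(k-1,1)` (concretely: antisymmetric functions on ordered pairs with
vanishing row sums). Then the restriction `M|_Y` decomposes as `θ ⊕ M₀`: there are
`Y`-invariant submodules `M₀` and `W` of `M` with `M = M₀ ⊕ W`, where `W` is a line on
which `Y` acts by `θ`; in particular `M₀` is a `Y`-invariant hyperplane of `M` with
`M/M₀ ≅ θ` as `Y`-modules. -/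
theorem M_restricted_to_Y_decomposes (k p : ℕ) (hk : 10 ≤ k) (hp : p.Prime)
    [Fact p.Prime] (hodd : Odd p) (hdvd : p ∣ k) :
    ∃ M₀ W : Submodule (ZMod p) (OP k → ZMod p),
      M₀ ≤ spechtHook k (ZMod p) ∧ W ≤ spechtHook k (ZMod p) ∧
      M₀ ⊔ W = spechtHook k (ZMod p) ∧ M₀ ⊓ W = ⊥ ∧
      Module.finrank (ZMod p) W = 1 ∧
      (∀ y : MulAction.stabilizer (alternatingGroup (Fin k)) (pair01 k (by omega)),
        ∀ v ∈ M₀,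
          permRep (ZMod p) (alternatingGroup (Fin k)) (OP k)
            (y : alternatingGroup (Fin k)) v ∈ M₀) ∧
      (∀ y : MulAction.stabilizer (alternatingGroup (Fin k)) (pair01 k (by omega)),
        ∀ v ∈ W,
          permRep (ZMod p) (alternatingGroup (Fin k)) (OP k)
            (y : alternatingGroup (Fin k)) v
            = thetaChar k (by omega) (ZMod p)
                ((y : alternatingGroup (Fin k)) : Equiv.Perm (Fin k)) • v) := by
  have hk2 : 2 ≤ k := by omega
  have hkF : ((k : ℕ) : ZMod p) = 0 := by
    rw [ZMod.natCast_eq_zero_iff]; exact hdvd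
  have h2 : (2 : ZMod p) ≠ 0 := by
    intro h
    have hd : p ∣ 2 := by
      have := (ZMod.natCast_eq_zero_iff 2 p).1 (by exact_mod_cast h)
      exact this
    rcases (Nat.prime_dvd_prime_iff_eq hp Nat.prime_two).1 hd with rfl
    simp [Nat.odd_iff] at hodd
  set w : OP k → ZMod p := wvec k hk2 (ZMod p) with hw
  have hwM : w ∈ spechtHook k (ZMod p) :=
    ⟨wvec_mem_antisym k hk2 (ZMod p), wvec_mem_rowZero k hk2 (ZMod p) hkF⟩
  have hwq : w (op01 k hk2) = 2 := by
    show cfun k hk2 (ZMod p) (pt0 k hk2) - cfun k hk2 (ZMod p) (pt1 k hk2) = 2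
    have hne := pt0_ne_pt1 k hk2
    simp [cfun, hne, hne.symm]
    ring
  have hwne : w ≠ 0 := by
    intro h
    rw [h] at hwq
    exact h2 hwq.symm
  refine ⟨spechtHook k (ZMod p) ⊓ LinearMap.ker (LinearMap.proj (op01 k hk2)),
    Submodule.span (ZMod p) {w}, inf_le_left, ?_, ?_, ?_, ?_, ?_, ?_⟩
  · rw [Submodule.span_le, Set.singleton_subset_iff]; exact hwM
  · refine le_antisymm (sup_le inf_le_left ?_) ?_
    · rw [Submodule.span_le, Set.singleton_subset_iff]; exact hwM
    · intro f hf
      rw [Submodule.mem_sup]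
      refine ⟨f - ((2 : ZMod p)⁻¹ * f (op01 k hk2)) • w, ⟨?_, ?_⟩,
        ((2 : ZMod p)⁻¹ * f (op01 k hk2)) • w,
        Submodule.smul_mem _ _ (Submodule.mem_span_singleton_self w), by abel⟩
      · exact Submodule.sub_mem _ hf (Submodule.smul_mem _ _ hwM)
      · show (f - ((2 : ZMod p)⁻¹ * f (op01 k hk2)) • w) (op01 k hk2) = 0
        rw [Pi.sub_apply, Pi.smul_apply, smul_eq_mul, hwq]
        field_simp
        ring
  · rw [eq_bot_iff]
    rintro v ⟨⟨-, hker⟩, hspan⟩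
    obtain ⟨t, rfl⟩ := Submodule.mem_span_singleton.1 hspan
    have : (t • w) (op01 k hk2) = 0 := hker
    rw [Pi.smul_apply, smul_eq_mul, hwq] at this
    have ht : t = 0 := by
      rcases mul_eq_zero.1 this with h | h
      · exact h
      · exact absurd h h2
    simp [ht]
  · exact finrank_span_singleton hwne
  · intro y v hv
    set g : alternatingGroup (Fin k) := (y : alternatingGroup (Fin k)) with hg
    have hstab : ((g : Equiv.Perm (Fin k))⁻¹) • pair01 k hk2 = pair01 k hk2 := by
      rw [inv_smul_eq_iff]
      exact (y.2 : g • pair01 k (by omega) = pair01 k (by omega)).symm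
    refine ⟨spechtHook_inv_alt k (ZMod p) g v hv.1, ?_⟩
    show v (g⁻¹ • op01 k hk2) = 0
    have hker : v (op01 k hk2) = 0 := hv.2
    have hat := antisym_apply hv.1.1 (op01 k hk2)
    rcases stab_cases k hk2 _ hstab with ⟨e0, e1⟩ | ⟨e0, e1⟩
    · have : g⁻¹ • op01 k hk2 = op01 k hk2 := Subtype.ext (Prod.ext e0 e1)
      rw [this, hker]
    · have : g⁻¹ • op01 k hk2 = swapOP (op01 k hk2) := Subtype.ext (Prod.ext e0 e1)
      rw [this]
      rw [hker] at hat
      simpa using hat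
  · intro y v hv
    obtain ⟨t, rfl⟩ := Submodule.mem_span_singleton.1 hv
    set g : alternatingGroup (Fin k) := (y : alternatingGroup (Fin k)) with hg
    have hstab : ((g : Equiv.Perm (Fin k))⁻¹) • pair01 k hk2 = pair01 k hk2 := by
      rw [inv_smul_eq_iff]
      exact (y.2 : g • pair01 k (by omega) = pair01 k (by omega)).symm
    have key : permRep (ZMod p) (alternatingGroup (Fin k)) (OP k) g w
        = thetaChar k (by omega) (ZMod p) (g : Equiv.Perm (Fin k)) • w := by
      funext q
      show w (g⁻¹ • q) = thetaChar k (by omega) (ZMod p) (g : Equiv.Perm (Fin k)) * w q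
      rcases stab_cases k hk2 _ hstab with ⟨e0, e1⟩ | ⟨e0, e1⟩
      · have hy0 : (g : Equiv.Perm (Fin k)) (pt0 k hk2) = pt0 k hk2 := by
          conv_lhs => rw [← e0]
          exact (g : Equiv.Perm (Fin k)).apply_symm_apply _
        have hθ : thetaChar k (by omega : 2 ≤ k) (ZMod p) (g : Equiv.Perm (Fin k)) = 1 :=
          if_pos hy0
        rw [hθ, one_mul]
        show cfun k hk2 (ZMod p) ((g : Equiv.Perm (Fin k))⁻¹ q.1.1)
            - cfun k hk2 (ZMod p) ((g : Equiv.Perm (Fin k))⁻¹ q.1.2) = w q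
        rw [cfun_fix k hk2 (ZMod p) _ e0 e1, cfun_fix k hk2 (ZMod p) _ e0 e1]
        rfl
      · have hy0 : (g : Equiv.Perm (Fin k)) (pt0 k hk2) = pt1 k hk2 := by
          conv_lhs => rw [← e1]
          exact (g : Equiv.Perm (Fin k)).apply_symm_apply _
        have hθ : thetaChar k (by omega : 2 ≤ k) (ZMod p) (g : Equiv.Perm (Fin k)) = -1 := by
          refine if_neg ?_
          exact fun h => pt0_ne_pt1 k hk2 (hy0.symm.trans h).symm
        rw [hθ]
        show cfun k hk2 (ZMod p) ((g : Equiv.Perm (Fin k))⁻¹ q.1.1)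
            - cfun k hk2 (ZMod p) ((g : Equiv.Perm (Fin k))⁻¹ q.1.2) = -1 * w q
        rw [cfun_swp k hk2 (ZMod p) _ e0 e1, cfun_swp k hk2 (ZMod p) _ e0 e1]
        show -cfun k hk2 (ZMod p) q.1.1 - -cfun k hk2 (ZMod p) q.1.2
            = -1 * (cfun k hk2 (ZMod p) q.1.1 - cfun k hk2 (ZMod p) q.1.2)
        ring
    rw [map_smul, key, smul_comm]
end

section
/- For every k ≥ 7, there exists a nonsplit extension 1 → M → H → A_k → 1 with M a nontrivial elementary abelian 2-group such that H has a faithful transitive permutation representation of degree at most 2k(k-1). -/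
open Equiv

namespace GLaux

variable {k : ℕ}

abbrev Om (k : ℕ) := {p : Fin k × Fin k // p.1 ≠ p.2}

def swapOm (ω : Om k) : Om k := ⟨(ω.1.2, ω.1.1), ω.2.symm⟩

@[simp] lemma swapOm_swapOm (ω : Om k) : swapOm (swapOm ω) = ω := by
  rcases ω with ⟨⟨i, j⟩, h⟩; rfl

def permOm (σ : Perm (Fin k)) : Perm (Om k) :=
  Perm.subtypePerm (Equiv.prodCongr σ σ) (by
    rintro ⟨i, j⟩
    simp [Ne, EmbeddingLike.apply_eq_iff_eq])

lemma permOm_coe (σ : Perm (Fin k)) (ω : Om k) :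
    (permOm σ ω : Fin k × Fin k) = (σ ω.1.1, σ ω.1.2) := by
  rcases ω with ⟨⟨i, j⟩, h⟩; rfl

lemma permOm_mul_apply (σ τ : Perm (Fin k)) (ω : Om k) :
    permOm (σ * τ) ω = permOm σ (permOm τ ω) := by
  apply Subtype.ext
  simp [permOm_coe, Equiv.Perm.mul_apply]

lemma permOm_one_apply (ω : Om k) : permOm (1 : Perm (Fin k)) ω = ω := by
  apply Subtype.ext
  simp [permOm_coe]

def permOmHom : Perm (Fin k) →* Perm (Om k) where
  toFun := permOm
  map_one' := Equiv.ext fun ω => permOm_one_apply ω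
  map_mul' σ τ := Equiv.ext fun ω => permOm_mul_apply σ τ ω

lemma permOm_inv (σ : Perm (Fin k)) : (permOm σ)⁻¹ = permOm σ⁻¹ := by
  have := (map_inv (permOmHom (k := k)) σ)
  simpa [permOmHom] using this.symm

lemma permOm_swapOm (σ : Perm (Fin k)) (ω : Om k) :
    permOm σ (swapOm ω) = swapOm (permOm σ ω) := by
  rcases ω with ⟨⟨i, j⟩, h⟩; rfl

abbrev Yk (k : ℕ) := Om k × ZMod 2

def Tt (f : Om k → ZMod 2) (σ : Perm (Fin k)) : Perm (Yk k) where
  toFun x := (permOm σ x.1, x.2 + f (permOm σ x.1))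
  invFun x := ((permOm σ)⁻¹ x.1, x.2 + f x.1)
  left_inv := by
    rintro ⟨ω, ε⟩
    simp [add_assoc, CharTwo.add_self_eq_zero]
  right_inv := by
    rintro ⟨ω, ε⟩
    simp [add_assoc, CharTwo.add_self_eq_zero]

lemma Tt_apply (f : Om k → ZMod 2) (σ : Perm (Fin k)) (x : Yk k) :
    Tt f σ x = (permOm σ x.1, x.2 + f (permOm σ x.1)) := rfl

lemma Tt_mul (f g : Om k → ZMod 2) (σ τ : Perm (Fin k)) :
    Tt f σ * Tt g τ = Tt (fun ω => f ω + g (permOm σ⁻¹ ω)) (σ * τ) := by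
  apply Equiv.ext
  rintro ⟨ω, ε⟩
  have h1 : permOm (σ * τ) ω = permOm σ (permOm τ ω) := permOm_mul_apply σ τ ω
  have h2 : permOm σ⁻¹ (permOm σ (permOm τ ω)) = permOm τ ω := by
    rw [← permOm_mul_apply, inv_mul_cancel, permOm_one_apply]
  show Tt f σ (Tt g τ (ω, ε)) = _
  simp only [Tt_apply, h1, h2]
  refine Prod.ext rfl ?_
  ring

lemma Tt_one : Tt (fun _ => (0 : ZMod 2)) (1 : Perm (Fin k)) = 1 := by
  apply Equiv.ext
  rintro ⟨ω, ε⟩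
  simp [Tt_apply, permOm_one_apply]

lemma Tt_inj (hk : 2 ≤ k) {f g : Om k → ZMod 2} {σ τ : Perm (Fin k)}
    (h : Tt f σ = Tt g τ) : σ = τ ∧ f = g := by
  have happ : ∀ x : Yk k, Tt f σ x = Tt g τ x := fun x => by rw [h]
  have hst : σ = τ := by
    apply Equiv.ext
    intro i
    have : Nontrivial (Fin k) := Fin.nontrivial_iff_two_le.mpr hk
    obtain ⟨j, hj⟩ := exists_ne i
    have h1 := happ (⟨(i, j), hj.symm⟩, 0)
    have h2 := happ (⟨(j, i), hj⟩, 0)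
    have e1 : (permOm σ ⟨(i, j), hj.symm⟩ : Fin k × Fin k)
        = (permOm τ ⟨(i, j), hj.symm⟩ : Fin k × Fin k) := by
      rw [show permOm σ ⟨(i, j), hj.symm⟩ = permOm τ ⟨(i, j), hj.symm⟩ from
        Subtype.ext (congrArg Subtype.val (congrArg Prod.fst h1))]
    simp only [permOm_coe] at e1
    exact (Prod.ext_iff.mp e1).1
  refine ⟨hst, funext fun ω => ?_⟩
  have h1 := happ ((permOm σ)⁻¹ ω, 0)
  have hfix : permOm σ ((permOm σ)⁻¹ ω) = ω := Equiv.apply_symm_apply _ _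
  rw [hst] at hfix
  simp only [Tt_apply, hst, hfix] at h1
  have := (Prod.ext_iff.mp h1).2
  simpa using this

def flipv (σ : Perm (Fin k)) (ω : Om k) : ZMod 2 :=
  if (ω.1.1 < ω.1.2 ↔ σ⁻¹ ω.1.1 < σ⁻¹ ω.1.2) then 0 else 1

lemma flipv_one (ω : Om k) : flipv (1 : Perm (Fin k)) ω = 0 := by
  simp [flipv]

lemma flipv_mul (σ τ : Perm (Fin k)) (ω : Om k) :
    flipv (σ * τ) ω = flipv σ ω + flipv τ (permOm σ⁻¹ ω) := by
  rcases ω with ⟨⟨i, j⟩, hij⟩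
  simp only [flipv, permOm_coe, mul_inv_rev, Equiv.Perm.mul_apply]
  by_cases h1 : i < j <;> by_cases h2 : σ⁻¹ i < σ⁻¹ j <;>
    by_cases h3 : τ⁻¹ (σ⁻¹ i) < τ⁻¹ (σ⁻¹ j) <;>
    simp [h1, h2, h3, -Equiv.Perm.coe_inv] <;> decide

lemma flipv_swapOm (σ : Perm (Fin k)) (ω : Om k) :
    flipv σ (swapOm ω) = flipv σ ω := by
  rcases ω with ⟨⟨i, j⟩, hij⟩
  have hij' : (σ⁻¹ i : Fin k) ≠ σ⁻¹ j := fun h => hij (σ⁻¹.injective h)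
  have e1 : (j < i ↔ ¬ i < j) := by
    constructor
    · exact fun h' => not_lt_of_gt h'
    · intro h'
      rcases lt_or_gt_of_ne hij with h | h
      · exact absurd h h'
      · exact h
  have e2 : (σ⁻¹ j < σ⁻¹ i ↔ ¬ σ⁻¹ i < σ⁻¹ j) := by
    constructor
    · exact fun h' => not_lt_of_gt h'
    · intro h'
      rcases lt_or_gt_of_ne hij' with h | h
      · exact absurd h h'
      · exact h
  simp only [flipv, swapOm, permOm_coe]
  simp only [e1, e2, not_iff_not]

def Compat (f : Om k → ZMod 2) (σ : Perm (Fin k)) : Prop :=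
  ∀ ω : Om k, f ω + f (swapOm ω) = flipv σ ω

lemma Tt_inv (f : Om k → ZMod 2) (σ : Perm (Fin k)) :
    (Tt f σ)⁻¹ = Tt (fun ω => f (permOm σ ω)) σ⁻¹ := by
  symm
  apply eq_inv_of_mul_eq_one_left
  rw [Tt_mul]
  have : (fun ω => f (permOm σ ω) + f (permOm σ⁻¹⁻¹ ω)) = fun _ => (0 : ZMod 2) := by
    funext ω
    rw [inv_inv, CharTwo.add_self_eq_zero]
  rw [this, inv_mul_cancel, Tt_one]

def Hgrp (k : ℕ) : Subgroup (Perm (Yk k)) where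
  carrier := {e | ∃ σ f, σ ∈ alternatingGroup (Fin k) ∧ Compat f σ ∧ e = Tt f σ}
  one_mem' := ⟨1, fun _ => 0, one_mem _, fun ω => by simp [flipv_one], Tt_one.symm⟩
  mul_mem' := by
    rintro a b ⟨σ, f, hσ, hf, rfl⟩ ⟨τ, g, hτ, hg, rfl⟩
    refine ⟨σ * τ, fun ω => f ω + g (permOm σ⁻¹ ω), mul_mem hσ hτ, ?_, Tt_mul f g σ τ⟩
    intro ω
    have h1 : permOm σ⁻¹ (swapOm ω) = swapOm (permOm σ⁻¹ ω) := permOm_swapOm σ⁻¹ ω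
    dsimp only
    rw [h1, flipv_mul]
    have := hf ω
    have := hg (permOm σ⁻¹ ω)
    calc f ω + g (permOm σ⁻¹ ω) + (f (swapOm ω) + g (swapOm (permOm σ⁻¹ ω)))
        = (f ω + f (swapOm ω)) + (g (permOm σ⁻¹ ω) + g (swapOm (permOm σ⁻¹ ω))) := by ring
      _ = flipv σ ω + flipv τ (permOm σ⁻¹ ω) := by rw [hf ω, hg (permOm σ⁻¹ ω)]
  inv_mem' := by
    rintro a ⟨σ, f, hσ, hf, rfl⟩
    refine ⟨σ⁻¹, fun ω => f (permOm σ ω), inv_mem hσ, ?_, (Tt_inv f σ)⟩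
    intro ω
    have h1 : permOm σ (swapOm ω) = swapOm (permOm σ ω) := permOm_swapOm σ ω
    dsimp only
    rw [h1, hf (permOm σ ω)]
    -- flipv σ (permOm σ ω) = flipv σ⁻¹ ω
    rcases ω with ⟨⟨i, j⟩, hij⟩
    simp only [flipv, permOm_coe, inv_inv]
    rw [Equiv.Perm.inv_def, Equiv.symm_apply_apply, Equiv.symm_apply_apply,
      if_congr Iff.comm rfl rfl]

lemma mem_Hgrp {e : Perm (Yk k)} :
    e ∈ Hgrp k ↔ ∃ σ f, σ ∈ alternatingGroup (Fin k) ∧ Compat f σ ∧ e = Tt f σ := Iff.rfl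

noncomputable def sigma0 (x : Hgrp k) : Perm (Fin k) :=
  (mem_Hgrp.mp x.2).choose

lemma sigma0_spec (x : Hgrp k) :
    ∃ f, sigma0 x ∈ alternatingGroup (Fin k) ∧ Compat f (sigma0 x) ∧
      (x : Perm (Yk k)) = Tt f (sigma0 x) :=
  (mem_Hgrp.mp x.2).choose_spec

lemma sigma0_unique (hk : 2 ≤ k) {x : Hgrp k} {f : Om k → ZMod 2} {σ : Perm (Fin k)}
    (h : (x : Perm (Yk k)) = Tt f σ) : sigma0 x = σ := by
  obtain ⟨g, _, _, hg⟩ := sigma0_spec x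
  exact (Tt_inj hk (hg.symm.trans h)).1

noncomputable def psi (hk : 2 ≤ k) : Hgrp k →* Perm (Fin k) where
  toFun := sigma0
  map_one' := sigma0_unique hk (h := Tt_one.symm)
  map_mul' x y := by
    obtain ⟨f, _, _, hf⟩ := sigma0_spec x
    obtain ⟨g, _, _, hg⟩ := sigma0_spec y
    apply sigma0_unique hk
    show (x : Perm (Yk k)) * (y : Perm (Yk k)) = _
    rw [hf, hg, Tt_mul]

def liftf (σ : Perm (Fin k)) : Om k → ZMod 2 :=
  fun ω => if ω.1.1 < ω.1.2 then flipv σ ω else 0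

lemma compat_liftf (σ : Perm (Fin k)) : Compat (liftf σ) σ := by
  intro ω
  rcases ω with ⟨⟨i, j⟩, hij⟩
  have hij' : i ≠ j := hij
  have hsw : flipv σ (swapOm ⟨(i, j), hij⟩) = flipv σ ⟨(i, j), hij⟩ := flipv_swapOm σ _
  simp only [liftf, swapOm] at *
  rcases lt_or_gt_of_ne hij' with h | h
  · simp [h, not_lt_of_gt h]
  · simp only [if_neg (not_lt_of_gt h), if_pos h, zero_add, hsw]

lemma Tt_liftf_mem {σ : Perm (Fin k)} (hσ : σ ∈ alternatingGroup (Fin k)) :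
    Tt (liftf σ) σ ∈ Hgrp k :=
  ⟨σ, liftf σ, hσ, compat_liftf σ, rfl⟩

/-- an element of `M` flipping the sign over the pair `ω₀`. -/
def sflip (ω₀ : Om k) : Om k → ZMod 2 :=
  fun ω => if ω = ω₀ ∨ ω = swapOm ω₀ then 1 else 0

lemma sflip_swapOm (ω₀ ω : Om k) : sflip ω₀ (swapOm ω) = sflip ω₀ ω := by
  simp only [sflip]
  refine if_congr ?_ rfl rfl
  constructor
  · rintro (h | h)
    · exact Or.inr (by rw [← h, swapOm_swapOm])
    · exact Or.inl (by
        have := congrArg swapOm h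
        rwa [swapOm_swapOm, swapOm_swapOm] at this)
  · rintro (h | h)
    · exact Or.inr (by rw [h])
    · exact Or.inl (by rw [h, swapOm_swapOm])

lemma compat_add_sflip {f : Om k → ZMod 2} {σ : Perm (Fin k)} (hf : Compat f σ)
    (ω₀ : Om k) (c : ZMod 2) : Compat (fun ω => f ω + c * sflip ω₀ ω) σ := by
  intro ω
  dsimp only
  rw [sflip_swapOm]
  calc f ω + c * sflip ω₀ ω + (f (swapOm ω) + c * sflip ω₀ ω)
      = f ω + f (swapOm ω) + (c * sflip ω₀ ω + c * sflip ω₀ ω) := by ring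
    _ = flipv σ ω := by rw [CharTwo.add_self_eq_zero, add_zero, hf ω]

lemma exists_elt_over (hk : 2 ≤ k) {σ : Perm (Fin k)} (hσ : σ ∈ alternatingGroup (Fin k))
    (ω₀ : Om k) (c : ZMod 2) :
    ∃ x : Hgrp k, sigma0 x = σ ∧
      (x : Perm (Yk k)) = Tt (fun ω => liftf σ ω + c * sflip ω₀ ω) σ := by
  refine ⟨⟨Tt (fun ω => liftf σ ω + c * sflip ω₀ ω) σ,
    ⟨σ, _, hσ, compat_add_sflip (compat_liftf σ) ω₀ c, rfl⟩⟩, ?_, rfl⟩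
  exact sigma0_unique hk (f := fun ω => liftf σ ω + c * sflip ω₀ ω) rfl

lemma psi_range (hk : 2 ≤ k) : (psi hk).range = alternatingGroup (Fin k) := by
  ext σ
  constructor
  · rintro ⟨x, rfl⟩
    obtain ⟨f, hA, _, _⟩ := sigma0_spec x
    exact hA
  · intro hσ
    exact ⟨⟨Tt (liftf σ) σ, Tt_liftf_mem hσ⟩, sigma0_unique hk (f := liftf σ) rfl⟩

lemma mem_ker_iff (hk : 2 ≤ k) {x : Hgrp k} :
    x ∈ (psi hk).ker ↔ ∃ f, Compat f 1 ∧ (x : Perm (Yk k)) = Tt f 1 := by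
  rw [MonoidHom.mem_ker]
  constructor
  · intro h
    obtain ⟨f, _, hc, he⟩ := sigma0_spec x
    refine ⟨f, ?_, ?_⟩
    · rwa [show sigma0 x = (psi hk) x from rfl, h] at hc
    · rwa [show sigma0 x = (psi hk) x from rfl, h] at he
  · rintro ⟨f, _, he⟩
    exact sigma0_unique hk he

/-- 2-transitivity of the alternating group on ordered pairs, `k ≥ 7`. -/
lemma alt_two_trans (hk : 7 ≤ k) (ω ω' : Om k) :
    ∃ σ ∈ alternatingGroup (Fin k), permOm σ ω = ω' := by
  obtain ⟨⟨i, j⟩, hij⟩ := ω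
  obtain ⟨⟨i', j'⟩, hij'⟩ := ω'
  have hij : i ≠ j := hij
  have hij' : i' ≠ j' := hij'
  -- find two auxiliary points outside {i', j'}
  obtain ⟨a, ha, b, hb, hab⟩ : ∃ a ∈ ({i', j'} : Finset (Fin k))ᶜ,
      ∃ b ∈ ({i', j'} : Finset (Fin k))ᶜ, a ≠ b := by
    apply Finset.one_lt_card.mp
    have h1 : ({i', j'} : Finset (Fin k)).card ≤ 2 := Finset.card_insert_le _ _ |>.trans
      (by simp)
    have h2 := Finset.card_compl ({i', j'} : Finset (Fin k))
    rw [h2]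
    simp only [Fintype.card_fin]
    omega
  rw [Finset.mem_compl, Finset.mem_insert, Finset.mem_singleton] at ha hb
  push_neg at ha hb
  set τ₁ := Equiv.swap i i' with hτ₁
  set j₁ := τ₁ j with hj₁
  have hj₁i' : j₁ ≠ i' := by
    intro h
    rw [hj₁] at h
    have h2 : τ₁ j = τ₁ i := h.trans (by rw [hτ₁]; exact (Equiv.swap_apply_left i i').symm)
    exact hij (τ₁.injective h2).symm
  set τ := Equiv.swap j₁ j' * τ₁ with hτ
  have hτi : τ i = i' := by
    rw [hτ, Equiv.Perm.mul_apply, hτ₁, Equiv.swap_apply_left,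
      Equiv.swap_apply_of_ne_of_ne (Ne.symm hj₁i') hij']
  have hτj : τ j = j' := by
    rw [hτ, Equiv.Perm.mul_apply, ← hj₁, Equiv.swap_apply_left]
  set σ : Perm (Fin k) := if Equiv.Perm.sign τ = 1 then τ else Equiv.swap a b * τ with hσdef
  have hσi : σ i = i' := by
    rw [hσdef]
    split
    · exact hτi
    · rw [Equiv.Perm.mul_apply, hτi, Equiv.swap_apply_of_ne_of_ne (Ne.symm ha.1) (Ne.symm hb.1)]
  have hσj : σ j = j' := by
    rw [hσdef]
    split
    · exact hτj
    · rw [Equiv.Perm.mul_apply, hτj, Equiv.swap_apply_of_ne_of_ne (Ne.symm ha.2) (Ne.symm hb.2)]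
  refine ⟨σ, ?_, ?_⟩
  · rw [Equiv.Perm.mem_alternatingGroup, hσdef]
    split
    · assumption
    · rw [map_mul, Equiv.Perm.sign_swap hab]
      rcases Int.units_eq_one_or (Equiv.Perm.sign τ) with h | h
      · exact absurd h (by assumption)
      · rw [h]; decide
  · apply Subtype.ext
    rw [permOm_coe]
    simp [hσi, hσj]

lemma trans_Yk (hk : 7 ≤ k) (x y : Yk k) :
    ∃ h ∈ Hgrp k, h x = y := by
  obtain ⟨ω, ε⟩ := x
  obtain ⟨ω', ε'⟩ := y
  obtain ⟨σ, hσ, hperm⟩ := alt_two_trans hk ω ω'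
  set c : ZMod 2 := ε' + ε + liftf σ ω' with hc
  obtain ⟨z, hz1, hz2⟩ := exists_elt_over (by omega) hσ ω' c
  refine ⟨(z : Perm (Yk k)), z.2, ?_⟩
  rw [hz2, Tt_apply, hperm]
  have hsf : sflip ω' ω' = 1 := if_pos (Or.inl rfl)
  refine Prod.ext rfl ?_
  dsimp only
  rw [hsf, hc]
  ring_nf
  have h2 : (2 : ZMod 2) = 0 := rfl
  rw [h2, mul_zero, mul_zero, zero_add, zero_add]

section Mprops

variable (hk : 2 ≤ k)

lemma M_ne_bot (hk7 : 7 ≤ k) : (psi (by omega : 2 ≤ k)).ker ≠ ⊥ := by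
  have hk : 2 ≤ k := by omega
  set ω₀ : Om k := ⟨(⟨0, by omega⟩, ⟨1, by omega⟩), by simp [Fin.ext_iff]⟩ with hω₀
  have hcompat : Compat (sflip ω₀) (1 : Perm (Fin k)) := by
    intro ω
    rw [sflip_swapOm, CharTwo.add_self_eq_zero, flipv_one]
  have hmem : Tt (sflip ω₀) 1 ∈ Hgrp k := ⟨1, sflip ω₀, one_mem _, hcompat, rfl⟩
  set x₀ : Hgrp k := ⟨Tt (sflip ω₀) 1, hmem⟩ with hx₀
  intro hbot
  have hker : x₀ ∈ (psi (by omega : 2 ≤ k)).ker := by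
    rw [MonoidHom.mem_ker]
    exact sigma0_unique hk (f := sflip ω₀) rfl
  rw [hbot, Subgroup.mem_bot] at hker
  have : (x₀ : Perm (Yk k)) (ω₀, 0) = (ω₀, 0) := by rw [hker]; rfl
  rw [hx₀] at this
  simp only [Tt_apply, permOm_one_apply] at this
  have h1 : sflip ω₀ ω₀ = 1 := if_pos (Or.inl rfl)
  rw [h1] at this
  exact one_ne_zero ((Prod.ext_iff.mp this).2.trans (by simp))

lemma M_elem_form {x : Hgrp k} (hx : x ∈ (psi hk).ker) :
    ∃ f, Compat f 1 ∧ (x : Perm (Yk k)) = Tt f 1 := (mem_ker_iff hk).mp hx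

lemma M_sq (x : Hgrp k) (hx : x ∈ (psi hk).ker) : x ^ 2 = 1 := by
  obtain ⟨f, _, hf⟩ := M_elem_form hk hx
  have : ((x ^ 2 : Hgrp k) : Perm (Yk k)) = 1 := by
    push_cast [pow_two]
    rw [hf, Tt_mul]
    rw [show (fun ω => f ω + f (permOm (1 : Perm (Fin k))⁻¹ ω)) = fun _ => (0 : ZMod 2) by
      funext ω; rw [inv_one, permOm_one_apply, CharTwo.add_self_eq_zero]]
    rw [mul_one, Tt_one]
  exact Subtype.ext this

lemma M_comm (x : Hgrp k) (hx : x ∈ (psi hk).ker) (y : Hgrp k) (hy : y ∈ (psi hk).ker) :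
    x * y = y * x := by
  obtain ⟨f, _, hf⟩ := M_elem_form hk hx
  obtain ⟨g, _, hg⟩ := M_elem_form hk hy
  apply Subtype.ext
  push_cast
  rw [hf, hg, Tt_mul, Tt_mul]
  congr 1
  funext ω
  exact add_comm _ _

end Mprops

lemma nonsplit (hk7 : 7 ≤ k) :
    ¬ ∃ K : Subgroup (Hgrp k), ((psi (by omega : 2 ≤ k)).ker).IsComplement' K := by
  have hk : 2 ≤ k := by omega
  rintro ⟨K, hK⟩
  set i0 : Fin k := ⟨0, by omega⟩
  set i1 : Fin k := ⟨1, by omega⟩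
  set i2 : Fin k := ⟨2, by omega⟩
  set i3 : Fin k := ⟨3, by omega⟩
  have h01 : i0 ≠ i1 := by simp [i0, i1, Fin.ext_iff]
  have h23 : i2 ≠ i3 := by simp [i2, i3, Fin.ext_iff]
  have h02 : i0 ≠ i2 := by simp [i0, i2, Fin.ext_iff]
  have h03 : i0 ≠ i3 := by simp [i0, i3, Fin.ext_iff]
  have h12 : i1 ≠ i2 := by simp [i1, i2, Fin.ext_iff]
  have h13 : i1 ≠ i3 := by simp [i1, i3, Fin.ext_iff]
  set s1 : Perm (Fin k) := Equiv.swap i0 i1 with hs1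
  set s2 : Perm (Fin k) := Equiv.swap i2 i3 with hs2
  set σ₀ : Perm (Fin k) := s1 * s2 with hσ₀
  have hσ₀A : σ₀ ∈ alternatingGroup (Fin k) := by
    rw [Equiv.Perm.mem_alternatingGroup, hσ₀, map_mul, hs1, hs2,
      Equiv.Perm.sign_swap h01, Equiv.Perm.sign_swap h23]
    decide
  have hcomm : s2 * s1 = s1 * s2 := by
    rw [hs1, hs2]
    apply Equiv.Perm.Disjoint.commute
    intro x
    by_cases hx2 : x = i2
    · exact Or.inr (by rw [hx2]; exact Equiv.swap_apply_of_ne_of_ne h02.symm h12.symm)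
    · by_cases hx3 : x = i3
      · exact Or.inr (by rw [hx3]; exact Equiv.swap_apply_of_ne_of_ne h03.symm h13.symm)
      · exact Or.inl (Equiv.swap_apply_of_ne_of_ne hx2 hx3)
  have hσsq : σ₀ * σ₀ = 1 := by
    rw [hσ₀, mul_assoc, ← mul_assoc s2, hcomm, mul_assoc s1, ← mul_assoc,
      Equiv.swap_mul_self, Equiv.swap_mul_self, one_mul]
  have hσinv : σ₀⁻¹ = σ₀ := inv_eq_of_mul_eq_one_right hσsq
  have hσ01 : σ₀ i0 = i1 := by
    rw [hσ₀, Equiv.Perm.mul_apply, hs2, Equiv.swap_apply_of_ne_of_ne h02 h03, hs1,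
      Equiv.swap_apply_left]
  have hσ10 : σ₀ i1 = i0 := by
    rw [hσ₀, Equiv.Perm.mul_apply, hs2, Equiv.swap_apply_of_ne_of_ne h12 h13, hs1,
      Equiv.swap_apply_right]
  set ω₀ : Om k := ⟨(i0, i1), h01⟩ with hω₀
  -- the element of Hgrp above σ₀
  set x₀ : Hgrp k := ⟨Tt (liftf σ₀) σ₀, Tt_liftf_mem hσ₀A⟩ with hx₀
  obtain ⟨⟨⟨m, hm⟩, ⟨c, hc⟩⟩, hmc, -⟩ := hK.existsUnique x₀
  simp only at hmc
  have hψx₀ : psi hk x₀ = σ₀ := sigma0_unique hk (f := liftf σ₀) rfl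
  have hψm : psi hk m = 1 := hm
  have hψc : psi hk c = σ₀ := by
    have := congrArg (psi hk) hmc
    rw [map_mul, hψm, one_mul] at this
    rw [this, hψx₀]
  have hc2K : c ^ 2 ∈ K := pow_mem hc 2
  have hc2M : c ^ 2 ∈ (psi hk).ker := by
    rw [MonoidHom.mem_ker, map_pow, hψc, pow_two, hσsq]
  have hc2 : c ^ 2 = 1 := Subgroup.disjoint_def.mp hK.disjoint hc2M hc2K
  -- extract the data of c
  obtain ⟨f, -, hcompat, hval⟩ := sigma0_spec c
  have hσc : sigma0 c = σ₀ := hψc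
  rw [hσc] at hcompat hval
  have hval2 : ((c ^ 2 : Hgrp k) : Perm (Yk k)) = Tt (fun _ => 0) 1 := by
    rw [hc2, Tt_one]; rfl
  have hval2' : ((c ^ 2 : Hgrp k) : Perm (Yk k))
      = Tt (fun ω => f ω + f (permOm σ₀⁻¹ ω)) (σ₀ * σ₀) := by
    push_cast [pow_two]
    rw [hval, Tt_mul]
  have hfun := (Tt_inj hk (hval2'.symm.trans hval2)).2
  have hev := congrFun hfun ω₀
  have hperm : permOm σ₀⁻¹ ω₀ = swapOm ω₀ := by
    apply Subtype.ext
    rw [permOm_coe, hσinv]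
    simp [hω₀, swapOm, hσ01, hσ10]
  rw [hperm] at hev
  have hflip : flipv σ₀ ω₀ = 1 := by
    rw [flipv, hσinv, if_neg]
    simp only [hω₀]
    rw [hσ01, hσ10]
    intro hiff
    have h1 : i0 < i1 := by simp [i0, i1, Fin.lt_def]
    have h2 : ¬ i1 < i0 := by simp [i0, i1, Fin.lt_def]
    exact h2 (hiff.mp h1)
  rw [hcompat ω₀, hflip] at hev
  exact one_ne_zero hev

lemma card_Om : Fintype.card (Om k) = k * k - k := by
  have h1 : Fintype.card {p : Fin k × Fin k // p.1 = p.2} = k := by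
    refine Fintype.card_congr ⟨fun x => x.1.1, fun a => ⟨(a, a), rfl⟩, ?_, fun a => rfl⟩
      |>.trans (Fintype.card_fin k)
    rintro ⟨⟨a, b⟩, h⟩
    simp only at h
    subst h
    rfl
  have h2 : Fintype.card {p : Fin k × Fin k // ¬ p.1 = p.2}
      = Fintype.card (Fin k × Fin k) - Fintype.card {p : Fin k × Fin k // p.1 = p.2} :=
    Fintype.card_subtype_compl _
  have h3 : Fintype.card (Om k) = Fintype.card {p : Fin k × Fin k // ¬ p.1 = p.2} := rfl
  rw [h3, h2, h1, Fintype.card_prod, Fintype.card_fin]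

lemma card_Yk : Fintype.card (Yk k) = 2 * (k * (k - 1)) := by
  have : Fintype.card (Yk k) = Fintype.card (Om k) * Fintype.card (ZMod 2) :=
    Fintype.card_prod _ _
  rw [this, card_Om]
  have h2 : Fintype.card (ZMod 2) = 2 := rfl
  rw [h2]
  cases k with
  | zero => rfl
  | succ m =>
    have : (m + 1) * (m + 1) - (m + 1) = (m + 1) * m := by
      rw [Nat.mul_succ, Nat.add_sub_cancel]
    rw [this, Nat.succ_sub_one]
    ring

/-- transporting complements through a group isomorphism. -/
lemma isComplement'_comap {G G' : Type*} [Group G] [Group G'] (φ : G ≃* G')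
    {M' K' : Subgroup G'} (h : M'.IsComplement' K') :
    (M'.comap φ.toMonoidHom).IsComplement' (K'.comap φ.toMonoidHom) := by
  rw [Subgroup.isComplement'_def, Subgroup.isComplement_iff_existsUnique]
  intro g
  obtain ⟨⟨⟨s, hs⟩, ⟨t, ht⟩⟩, hst, huniq⟩ := h.existsUnique (φ g)
  simp only at hst
  refine ⟨⟨⟨φ.symm s, ?_⟩, ⟨φ.symm t, ?_⟩⟩, ?_, ?_⟩
  · show φ (φ.symm s) ∈ M'
    rwa [MulEquiv.apply_symm_apply]
  · show φ (φ.symm t) ∈ K'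
    rwa [MulEquiv.apply_symm_apply]
  · show φ.symm s * φ.symm t = g
    have : φ.symm (s * t) = φ.symm (φ g) := congrArg φ.symm hst
    rwa [map_mul, MulEquiv.symm_apply_apply] at this
  · rintro ⟨⟨s', hs'⟩, ⟨t', ht'⟩⟩ hst'
    have hst'' : φ s' * φ t' = φ g := by
      rw [← map_mul]
      exact congrArg φ hst'
    have := huniq ⟨⟨φ s', hs'⟩, ⟨φ t', ht'⟩⟩ hst''
    have h1 : φ s' = s := congrArg (fun p => (p.1 : G')) this
    have h2 : φ t' = t := congrArg (fun p => (p.2 : G')) this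
    refine Prod.ext ?_ ?_
    · apply Subtype.ext
      show s' = φ.symm s
      rw [← h1, MulEquiv.symm_apply_apply]
    · apply Subtype.ext
      show t' = φ.symm t
      rw [← h2, MulEquiv.symm_apply_apply]

end GLaux

open GLaux

/-- **Theorem (Guralnick–Liebeck, Theorem 1.2(ii) / Section 4).**
For every `k ≥ 7` there exists a nonsplit extension `1 → M → H → A_k → 1` with `M` a
nontrivial elementary abelian 2-group, such that `H` has a faithful transitive permutation
representation of degree at most `2k(k-1)`: i.e. for some `n ≤ 2k(k-1)`, `H` is realized
as a transitive subgroup of `S_n`. -/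
theorem exists_nonsplit_extension_transitive_perm_rep_even
    (k : ℕ) (hk : 7 ≤ k) :
    ∃ n : ℕ, n ≤ 2 * (k * (k - 1)) ∧
      ∃ H : Subgroup (Equiv.Perm (Fin n)),
        (∀ a b : Fin n, ∃ h ∈ H, h a = b) ∧
        ∃ M : Subgroup H, M ≠ ⊥ ∧
          (∀ x ∈ M, x ^ 2 = 1) ∧ (∀ x ∈ M, ∀ y ∈ M, x * y = y * x) ∧
          ∃ _ : M.Normal, Nonempty ((H ⧸ M) ≃* alternatingGroup (Fin k)) ∧
            ¬ ∃ K : Subgroup H, M.IsComplement' K := by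
  classical
  have hk2 : 2 ≤ k := by omega
  refine ⟨2 * (k * (k - 1)), le_refl _, ?_⟩
  let e : Yk k ≃ Fin (2 * (k * (k - 1))) := Fintype.equivFinOfCardEq card_Yk
  let Φ : Equiv.Perm (Yk k) →* Equiv.Perm (Fin (2 * (k * (k - 1)))) :=
    { toFun := fun σ => e.permCongr σ
      map_one' := by ext x; simp
      map_mul' := by intro σ τ; ext x; simp }
  have hΦapp : ∀ (σ : Equiv.Perm (Yk k)) (x), Φ σ x = e (σ (e.symm x)) := fun σ x => rfl
  have hΦinj : Function.Injective Φ := by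
    intro σ τ h
    apply Equiv.ext
    intro x
    have := congrArg (fun p : Equiv.Perm (Fin (2 * (k * (k - 1)))) => e.symm (p (e x))) h
    simpa [hΦapp] using this
  set H' : Subgroup (Equiv.Perm (Fin (2 * (k * (k - 1))))) := (Hgrp k).map Φ with hH'
  let iso : Hgrp k ≃* H' := Subgroup.equivMapOfInjective (Hgrp k) Φ hΦinj
  set M : Subgroup (Hgrp k) := (psi hk2).ker with hM
  set M' : Subgroup H' := M.map iso.toMonoidHom with hM'
  refine ⟨H', ?_, M', ?_, ?_, ?_, ?_, ?_, ?_⟩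
  · -- transitivity
    intro a b
    obtain ⟨h, hmem, hact⟩ := trans_Yk hk (e.symm a) (e.symm b)
    refine ⟨Φ h, ⟨h, hmem, rfl⟩, ?_⟩
    rw [hΦapp, hact, Equiv.apply_symm_apply]
  · -- M' ≠ ⊥
    intro hbot
    have hinj : Function.Injective iso.toMonoidHom := iso.injective
    rw [hM', M.map_eq_bot_iff_of_injective hinj] at hbot
    exact M_ne_bot hk2 hk hbot
  · -- squares
    intro x hx
    obtain ⟨y, hy, rfl⟩ := hx
    rw [← map_pow, M_sq hk2 y hy, map_one]
  · -- commutativity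
    intro x hx y hy
    obtain ⟨x', hx', rfl⟩ := hx
    obtain ⟨y', hy', rfl⟩ := hy
    rw [← map_mul, ← map_mul, M_comm hk2 x' hx' y' hy']
  · -- normal
    exact Subgroup.Normal.map (MonoidHom.normal_ker (psi hk2)) iso.toMonoidHom iso.surjective
  · -- quotient iso
    haveI : M.Normal := MonoidHom.normal_ker (psi hk2)
    haveI : M'.Normal := Subgroup.Normal.map (MonoidHom.normal_ker (psi hk2))
      iso.toMonoidHom iso.surjective
    have qc : (Hgrp k ⧸ M) ≃* (H' ⧸ M') := QuotientGroup.congr M M' iso rfl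
    have iso2 : (Hgrp k ⧸ M) ≃* (psi hk2).range := QuotientGroup.quotientKerEquivRange (psi hk2)
    have iso3 : ((psi hk2).range : Subgroup (Equiv.Perm (Fin k))) ≃* alternatingGroup (Fin k) :=
      MulEquiv.subgroupCongr (psi_range hk2)
    exact ⟨(qc.symm.trans iso2).trans iso3⟩
  · -- nonsplit
    rintro ⟨K', hK'⟩
    apply nonsplit (k := k) hk
    refine ⟨K'.comap iso.toMonoidHom, ?_⟩
    have hinj : Function.Injective iso.toMonoidHom := iso.injective
    have h := isComplement'_comap iso hK'
    rwa [hM', Subgroup.comap_map_eq_self_of_injective hinj] at h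
end
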